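/- arXiv:2308.11882 — 9 statements merged into one kernel-verified Lean document; each statement's English description precedes it below -/
import Mathlib

section
/- (Proposition 1, multilevel form of the GPMFD scheme.) Let R be a commutative ring, q ≥ 1 an integer, A a q×q matrix over R, and let γ_1,…,γ_{q+1} ∈ R be the coefficients of the monic characteristic polynomial of A, i.e. charpoly(A) = Σ_{k=1}^{q+1} γ_k x^{k−1} with γ_{q+1} = 1. Suppose m, b : ℤ → R^q satisfy the one-step recurrence m(n+1) = A·m(n) + b(n) for all n ∈ ℤ. Then for every n ∈ ℤ the identity m(n+1) = − Σ_{k=1}^{q} γ_k · m(n+k−q) + Σ_{k=1}^{q} Σ_{l=1}^{k} γ_{q+1+l−k} · A^{l−1} · b(n−k+1) holds in R^q; in particular, its first component is the (q+1)-level macroscopic finite-difference (GPMFD) scheme on the conservative moment m_1. -/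
private lemma gpmfd_sum_mulVec {R : Type*} [CommRing R] {q : ℕ} (s : Finset ℕ)
    (f : ℕ → Matrix (Fin q) (Fin q) R) (v : Fin q → R) :
    (∑ i ∈ s, f i).mulVec v = ∑ i ∈ s, (f i).mulVec v := by
  induction s using Finset.induction with
  | empty => simp [Matrix.zero_mulVec]
  | insert a s h ih => simp [Finset.sum_insert h, Matrix.add_mulVec, ih]

private lemma gpmfd_unroll {R : Type*} [CommRing R] {q : ℕ} (A : Matrix (Fin q) (Fin q) R)
    (m b : ℤ → Fin q → R)
    (hrec : ∀ n : ℤ, m (n + 1) = A.mulVec (m n) + b n) :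
    ∀ (j : ℕ) (n : ℤ), m (n + 1) = (A ^ j).mulVec (m (n + 1 - j))
      + ∑ i ∈ Finset.range j, (A ^ i).mulVec (b (n - i)) := by
  intro j
  induction j with
  | zero => intro n; simp [Matrix.one_mulVec]
  | succ j ih =>
    intro n
    rw [ih n, show (n:ℤ)+1-(j:ℤ) = (n - j)+1 by ring, hrec (n-j),
      Matrix.mulVec_add, Matrix.mulVec_mulVec, ← pow_succ, Finset.sum_range_succ,
      show ((n:ℤ) - j) = n + 1 - ((j:ℕ)+1:ℕ) by push_cast; ring]
    push_cast
    ring_nf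


private lemma gpmfd_sum_Icc_one {M : Type*} [AddCommMonoid M] (q : ℕ) (f : ℕ → M) :
    ∑ k ∈ Finset.Icc 1 q, f k = ∑ j ∈ Finset.range q, f (j + 1) := by
  rw [← Finset.Ico_add_one_right_eq_Icc, Finset.sum_Ico_eq_sum_range, Nat.add_sub_cancel]
  exact Finset.sum_congr rfl (fun i _ => by rw [Nat.add_comm])

/-- Proposition 1 (multilevel form of the GPMFD scheme): if `m (n+1) = A.mulVec (m n) + b n`
for all `n : ℤ`, and `γ k := charpoly(A).coeff (k-1)` are the coefficients of the monic
characteristic polynomial of `A`, then the multiple-level identity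
`m (n+1) = - ∑_{k=1}^q γ_k • m (n+k-q)
          + ∑_{k=1}^q ∑_{l=1}^k γ_{q+1+l-k} • A^{l-1} ⬝ b (n-k+1)` holds. -/
theorem gpmfd_multilevel_scheme {R : Type*} [CommRing R] {q : ℕ} (hq : 1 ≤ q)
    (A : Matrix (Fin q) (Fin q) R) (m b : ℤ → Fin q → R)
    (hrec : ∀ n : ℤ, m (n + 1) = A.mulVec (m n) + b n) :
    ∀ n : ℤ,
      m (n + 1) =
        -(∑ k ∈ Finset.Icc 1 q, A.charpoly.coeff (k - 1) • m (n + (k : ℤ) - (q : ℤ)))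
          + ∑ k ∈ Finset.Icc 1 q, ∑ l ∈ Finset.Icc 1 k,
              A.charpoly.coeff (q + 1 + l - k - 1) •
                (A ^ (l - 1)).mulVec (b (n - (k : ℤ) + 1)) := by
  intro n
  rcases subsingleton_or_nontrivial R with hR | hR
  · exact Subsingleton.elim _ _
  set c : ℕ → R := fun j => A.charpoly.coeff j with hc
  -- Cayley–Hamilton
  have hd : A.charpoly.natDegree = q := by simpa using A.charpoly_natDegree_eq_dim
  have hCH : A ^ q = -∑ j ∈ Finset.range q, c j • A ^ j := by
    have h := A.aeval_self_charpoly
    rw [Polynomial.aeval_eq_sum_range, hd, Finset.sum_range_succ] at h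
    have hcq : A.charpoly.coeff q = 1 := by
      have := (A.charpoly_monic).coeff_natDegree
      rwa [hd] at this
    rw [hcq, one_smul] at h
    linear_combination (norm := abel) h
  have hcq : c q = 1 := by
    have := (A.charpoly_monic).coeff_natDegree
    rwa [hd] at this
  -- reindex the RHS sums to `range` form
  rw [gpmfd_sum_Icc_one, gpmfd_sum_Icc_one]
  -- rewrite RHS first sum: k = j + 1
  have e1 : ∀ j ∈ Finset.range q,
      c ((j + 1) - 1) • m (n + ((j + 1 : ℕ) : ℤ) - q) = c j • m (n + 1 + j - q) := by
    intro j hj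
    rw [Nat.add_sub_cancel, show (n + ((j + 1 : ℕ) : ℤ) - q) = n + 1 + j - q by push_cast; ring]
  rw [Finset.sum_congr rfl e1]
  -- rewrite RHS second sum
  have e2 : ∀ j ∈ Finset.range q,
      (∑ l ∈ Finset.Icc 1 (j + 1), c (q + 1 + l - (j + 1) - 1) •
        (A ^ (l - 1)).mulVec (b (n - ((j + 1 : ℕ) : ℤ) + 1)))
      = ∑ i ∈ Finset.range (j + 1), c (q + i - j) • (A ^ i).mulVec (b (n - j)) := by
    intro j hj
    simp only [Finset.mem_range] at hj
    rw [gpmfd_sum_Icc_one]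
    refine Finset.sum_congr rfl ?_
    intro i hi
    simp only [Finset.mem_range] at hi
    rw [show q + 1 + (i + 1) - (j + 1) - 1 = q + i - j by omega,
      Nat.add_sub_cancel, show n - ((j + 1 : ℕ) : ℤ) + 1 = n - j by push_cast; ring]
  rw [Finset.sum_congr rfl e2]
  -- use the unrolled recurrence with j = q and Cayley–Hamilton
  have hu := gpmfd_unroll A m b hrec q n
  rw [hCH, Matrix.neg_mulVec, gpmfd_sum_mulVec] at hu
  simp only [Matrix.smul_mulVec] at hu
  -- replace (A^j).mulVec (m (n+1-q)) using unroll at level j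
  have e3 : ∀ j ∈ Finset.range q,
      c j • (A ^ j).mulVec (m (n + 1 - q))
      = c j • m (n + 1 + j - q)
        - c j • ∑ i ∈ Finset.range j, (A ^ i).mulVec (b (n + j - q - i)) := by
    intro j hj
    have h := gpmfd_unroll A m b hrec j (n + j - q)
    rw [show (n:ℤ) + j - q + 1 - j = n + 1 - q by ring] at h
    rw [show (n:ℤ) + j - q + 1 = n + 1 + j - q by ring] at h
    rw [eq_sub_iff_add_eq, ← smul_add, ← h]
  rw [Finset.sum_congr rfl e3, Finset.sum_sub_distrib] at hu
  rw [hu]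
  -- remains: algebraic identity on the b-sums
  have key : ∑ j ∈ Finset.range q, ∑ i ∈ Finset.range (j + 1),
        c (q + i - j) • (A ^ i).mulVec (b (n - j))
      = ∑ j ∈ Finset.range q, c j • ∑ i ∈ Finset.range j,
          (A ^ i).mulVec (b (n + j - q - i))
        + ∑ i ∈ Finset.range q, (A ^ i).mulVec (b (n - i)) := by
    have diag : ∀ j ∈ Finset.range q,
        ∑ i ∈ Finset.range (j + 1), c (q + i - j) • (A ^ i).mulVec (b (n - j))
        = (∑ i ∈ Finset.range j, c (q + i - j) • (A ^ i).mulVec (b (n - j)))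
          + (A ^ j).mulVec (b (n - j)) := by
      intro j hj
      rw [Finset.sum_range_succ, show q + j - j = q by omega, hcq, one_smul]
    rw [Finset.sum_congr rfl diag, Finset.sum_add_distrib]
    congr 1
    -- off-diagonal bijection
    simp only [Finset.smul_sum]
    rw [Finset.sum_sigma' (Finset.range q) (fun j => Finset.range j),
      Finset.sum_sigma' (Finset.range q) (fun j => Finset.range j)]
    refine Finset.sum_nbij' (fun p => ⟨q + p.2 - p.1, p.2⟩) (fun p => ⟨q + p.2 - p.1, p.2⟩)
      ?_ ?_ ?_ ?_ ?_
    · intro p hp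
      simp only [Finset.mem_sigma, Finset.mem_range] at hp ⊢
      omega
    · intro p hp
      simp only [Finset.mem_sigma, Finset.mem_range] at hp ⊢
      omega
    · intro p hp
      simp only [Finset.mem_sigma, Finset.mem_range] at hp
      ext <;> simp <;> omega
    · intro p hp
      simp only [Finset.mem_sigma, Finset.mem_range] at hp
      ext <;> simp <;> omega
    · intro p hp
      simp only [Finset.mem_sigma, Finset.mem_range] at hp
      rw [show (n:ℤ) - p.1 = n + ((q + p.2 - p.1 : ℕ) : ℤ) - q - p.2 by omega]
  rw [key]
  abel
end

section
/- (Proposition 1, determinant/adjugate form of the GPMFD scheme.) Let R be a commutative ring, q ≥ 1, A a q×q matrix over R, and let c_i denote the coefficient of x^i in charpoly(A) for 0 ≤ i ≤ q. Define matrices C_i over R (0 ≤ i ≤ q−1) entrywise by letting (C_i)_{rs} be the coefficient of x^i in the (r,s)-entry of adj(charmatrix(A)) (each entry of this adjugate has degree ≤ q−1). Suppose m, b : ℤ → R^q satisfy m(n+1) = A·m(n) + b(n) for all n ∈ ℤ. Then for every n ∈ ℤ: Σ_{i=0}^{q} c_i · m(n+i) = Σ_{i=0}^{q−1} C_i ·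 b(n+i) in R^q. (This is the relation det(T^1·I_q − A)·m^n = adj(T^1·I_q − A)·(B·m^{eq,n} + Δt·W·F̃^n) of the paper, with T^1 the unit time-shift operator.) -/
open Polynomial Matrix Finset


/-- Proposition 1 (determinant/adjugate form of the GPMFD scheme): if
`m (n+1) = A.mulVec (m n) + b n` for all `n : ℤ`, then
`∑_{i=0}^{q} c_i • m (n+i) = ∑_{i=0}^{q-1} C_i ⬝ b (n+i)`, where `c_i` is the coefficient of
`x^i` in `charpoly A` and `C_i` is the matrix of `x^i`-coefficients of the entries of
`adjugate (charmatrix A)`. -/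
theorem gpmfd_det_adjugate_scheme {R : Type*} [CommRing R] {q : ℕ} (hq : 1 ≤ q)
    (A : Matrix (Fin q) (Fin q) R) (m b : ℤ → Fin q → R)
    (hrec : ∀ n : ℤ, m (n + 1) = A.mulVec (m n) + b n) :
    ∀ n : ℤ,
      ∑ i ∈ Finset.range (q + 1), A.charpoly.coeff i • m (n + (i : ℤ))
        = ∑ i ∈ Finset.range q,
            (Matrix.of fun r s => (((Matrix.charmatrix A).adjugate) r s).coeff i).mulVec
              (b (n + (i : ℤ))) := by
  intro n
  rcases subsingleton_or_nontrivial R with hR | hR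
  · exact Subsingleton.elim _ _
  set P : Polynomial (Matrix (Fin q) (Fin q) R) :=
    matPolyEquiv ((Matrix.charmatrix A).adjugate) with hP
  -- the fundamental identity
  have h : P * (Polynomial.X - Polynomial.C A)
      = (A.charpoly).map (algebraMap R (Matrix (Fin q) (Fin q) R)) := by
    have h0 : A.charpoly • (1 : Matrix (Fin q) (Fin q) (Polynomial R))
        = (Matrix.charmatrix A).adjugate * Matrix.charmatrix A :=
      (Matrix.adjugate_mul _).symm
    apply_fun matPolyEquiv at h0
    rw [_root_.map_mul, matPolyEquiv_charmatrix, matPolyEquiv_smul_one] at h0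
    exact h0.symm
  have hkey : ∀ k, P.coeff k - P.coeff (k + 1) * A
      = A.charpoly.coeff (k + 1) • (1 : Matrix (Fin q) (Fin q) R) := by
    intro k
    have h1 : (P * (Polynomial.X - Polynomial.C A)).coeff (k + 1)
        = P.coeff k - P.coeff (k + 1) * A := by
      rw [mul_sub, Polynomial.coeff_sub, Polynomial.coeff_mul_X, Polynomial.coeff_mul_C]
    rw [← h1, h, Polynomial.coeff_map, Algebra.algebraMap_eq_smul_one]
  have hkey0 : -(P.coeff 0 * A)
      = A.charpoly.coeff 0 • (1 : Matrix (Fin q) (Fin q) R) := by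
    have h1 : (P * (Polynomial.X - Polynomial.C A)).coeff 0 = -(P.coeff 0 * A) := by
      rw [Polynomial.mul_coeff_zero, Polynomial.coeff_sub, Polynomial.coeff_X_zero,
        Polynomial.coeff_C_zero, zero_sub, mul_neg]
    rw [← h1, h, Polynomial.coeff_map, Algebra.algebraMap_eq_smul_one]
  -- coefficients above degree q - 1 vanish
  have hstep : ∀ k, q ≤ k → P.coeff k = P.coeff (k + 1) * A := by
    intro k hk
    have hc : A.charpoly.coeff (k + 1) = 0 := by
      apply Polynomial.coeff_eq_zero_of_natDegree_lt
      rw [Matrix.charpoly_natDegree_eq_dim, Fintype.card_fin]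
      omega
    have := hkey k
    rw [hc, zero_smul, sub_eq_zero] at this
    exact this
  have hiter : ∀ j k, q ≤ k → P.coeff k = P.coeff (k + j) * A ^ j := by
    intro j
    induction j with
    | zero => intro k hk; simp
    | succ j ih =>
      intro k hk
      rw [hstep k hk, ih (k + 1) (by omega), pow_succ]
      rw [show k + 1 + j = k + (j + 1) by omega, mul_assoc]
  have hDq : P.coeff q = 0 := by
    rw [hiter (P.natDegree + 1) q le_rfl,
      Polynomial.coeff_eq_zero_of_natDegree_lt (by omega), zero_mul]
  -- rewrite the RHS matrices as coefficients of P
  have hC : ∀ i, (Matrix.of fun r s => (((Matrix.charmatrix A).adjugate) r s).coeff i)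
      = P.coeff i := by
    intro i
    ext r s
    simp [hP, matPolyEquiv_coeff_apply]
  set v : ℕ → Fin q → R := fun k => m (n + (k : ℤ)) with hv
  have hb : ∀ i : ℕ, b (n + (i : ℤ)) = v (i + 1) - A.mulVec (v i) := by
    intro i
    have h2 := hrec (n + (i : ℤ))
    have h3 : n + (i : ℤ) + 1 = n + ((i + 1 : ℕ) : ℤ) := by push_cast; ring
    rw [h3] at h2
    rw [hv]
    simp only []
    rw [h2]
    abel
  have hsmul : ∀ (k : ℕ) (w : Fin q → R), A.charpoly.coeff (k + 1) • w
      = (P.coeff k).mulVec w - (P.coeff (k + 1)).mulVec (A.mulVec w) := by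
    intro k w
    rw [Matrix.mulVec_mulVec, ← Matrix.sub_mulVec, hkey k, Matrix.smul_mulVec,
      Matrix.one_mulVec]
  have hsmul0 : ∀ w : Fin q → R, A.charpoly.coeff 0 • w
      = -((P.coeff 0).mulVec (A.mulVec w)) := by
    intro w
    rw [Matrix.mulVec_mulVec, ← Matrix.neg_mulVec, hkey0, Matrix.smul_mulVec,
      Matrix.one_mulVec]
  have hveq : ∀ i : ℕ, m (n + (i : ℤ)) = v i := fun i => rfl
  simp only [hveq, hC, hb]
  calc ∑ i ∈ Finset.range (q + 1), A.charpoly.coeff i • v i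
      = (∑ i ∈ Finset.range q, A.charpoly.coeff (i + 1) • v (i + 1))
          + A.charpoly.coeff 0 • v 0 :=
        Finset.sum_range_succ' _ _
    _ = (∑ i ∈ Finset.range q,
          ((P.coeff i).mulVec (v (i + 1)) - (P.coeff (i + 1)).mulVec (A.mulVec (v (i + 1)))))
          + -((P.coeff 0).mulVec (A.mulVec (v 0))) := by
        rw [hsmul0]
        congr 1
        exact Finset.sum_congr rfl fun i _ => hsmul i _
    _ = (∑ i ∈ Finset.range q, (P.coeff i).mulVec (v (i + 1)))
          - ((∑ i ∈ Finset.range q, (P.coeff (i + 1)).mulVec (A.mulVec (v (i + 1))))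
            + (P.coeff 0).mulVec (A.mulVec (v 0))) := by
        rw [Finset.sum_sub_distrib]
        abel
    _ = (∑ i ∈ Finset.range q, (P.coeff i).mulVec (v (i + 1)))
          - ∑ i ∈ Finset.range (q + 1), (P.coeff i).mulVec (A.mulVec (v i)) := by
        rw [Finset.sum_range_succ' (fun i => (P.coeff i).mulVec (A.mulVec (v i)))]
    _ = (∑ i ∈ Finset.range q, (P.coeff i).mulVec (v (i + 1)))
          - ∑ i ∈ Finset.range q, (P.coeff i).mulVec (A.mulVec (v i)) := by
        rw [Finset.sum_range_succ, hDq, Matrix.zero_mulVec, add_zero]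
    _ = ∑ i ∈ Finset.range q, (P.coeff i).mulVec (v (i + 1) - A.mulVec (v i)) := by
        rw [← Finset.sum_sub_distrib]
        exact Finset.sum_congr rfl fun i _ => (Matrix.mulVec_sub _ _ _).symm
end

section
/- (Corollary 1: the j-th row of the macroscopic finite-difference scheme is independent of the relaxation parameter s_j.) Let R be a commutative ring, q ≥ 1, W relocated q×q matrix over R, j ∈ {1,…,q}, and let s, s′ ∈ R^q satisfy s_l = s′_l for all l ≠ j. For t ∈ R^q put A(t) := W·(I_q − diag(t)) and B(t) := W·diag(t). Then: (i) charpoly(A(s)) − ( adj(charmatrix(A(s))) · B(s)ᶜ )_{jj} = charpoly(A(s′)) − ( adj(charmatrix(A(s′))) · B(s′)ᶜ )_{jj} as polynomials in R[x]; and (ii) for every k ≠ j, ( adj(charmatrix(A(s))) · B(s)ᶜ )_{jk} = ( adj(charmatrix(A(s′))) · B(s′)ᶜ )_{jk} in R[x]. Here Xᶜ denotes a matrix over R viewed over R[x] via the constant-polynomial embedding. Consequently, for a GPMRT-LB model with diagonal relaxation matrix, the scheme obtained on the j-th conservative moment does not depend on the relaxation parameter s_j. -/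
open Matrix Polynomial

private lemma adj_row_eq {R : Type*} [CommRing R] {q : ℕ}
    (W : Matrix (Fin q) (Fin q) R) (j : Fin q) (s s' : Fin q → R)
    (hs : ∀ l : Fin q, l ≠ j → s l = s' l) (i : Fin q) :
    (Matrix.charmatrix (W * (1 - Matrix.diagonal s))).adjugate j i
      = (Matrix.charmatrix (W * (1 - Matrix.diagonal s'))).adjugate j i := by
  have hcol : ∀ (b a : Fin q), a ≠ j →
      charmatrix (W * (1 - Matrix.diagonal s)) b a
        = charmatrix (W * (1 - Matrix.diagonal s')) b a := by
    intro b a ha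
    have hent : (W * (1 - Matrix.diagonal s)) b a = (W * (1 - Matrix.diagonal s')) b a := by
      simp only [mul_sub, mul_one, Matrix.sub_apply, Matrix.mul_diagonal]
      rw [hs a ha]
    rw [charmatrix_apply, charmatrix_apply, hent]
  have key : ∀ (M M' : Matrix (Fin q) (Fin q) (Polynomial R)),
      (∀ b a, a ≠ j → M b a = M' b a) → M.adjugate j i = M'.adjugate j i := by
    intro M M' h
    have t1 : M.adjugate j i = (Mᵀ).adjugate i j := by
      rw [← adjugate_transpose, transpose_apply]
    have t2 : M'.adjugate j i = (M'ᵀ).adjugate i j := by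
      rw [← adjugate_transpose, transpose_apply]
    rw [t1, t2, adjugate_apply, adjugate_apply]
    congr 1
    ext a b
    rcases eq_or_ne a j with rfl | ha
    · rw [updateRow_self, updateRow_self]
    · rw [updateRow_ne ha, updateRow_ne ha, transpose_apply, transpose_apply, h b a ha]
  exact key _ _ hcol

/-- Corollary 1: the `j`-th row of the macroscopic finite-difference scheme is independent of
the relaxation parameter `s_j`. Here `A(t) = W(I - diag t)`, `B(t) = W·diag t`, and `s, s'`
agree in every entry except possibly the `j`-th. -/
theorem scheme_independent_of_sj {R : Type*} [CommRing R] {q : ℕ} (hq : 1 ≤ q)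
    (W : Matrix (Fin q) (Fin q) R) (j : Fin q) (s s' : Fin q → R)
    (hs : ∀ l : Fin q, l ≠ j → s l = s' l) :
    ((W * (1 - Matrix.diagonal s)).charpoly
        - ((Matrix.charmatrix (W * (1 - Matrix.diagonal s))).adjugate
            * (W * Matrix.diagonal s).map Polynomial.C :
              Matrix (Fin q) (Fin q) (Polynomial R)) j j
      = (W * (1 - Matrix.diagonal s')).charpoly
        - ((Matrix.charmatrix (W * (1 - Matrix.diagonal s'))).adjugate
            * (W * Matrix.diagonal s').map Polynomial.C :
              Matrix (Fin q) (Fin q) (Polynomial R)) j j)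
    ∧ ∀ k : Fin q, k ≠ j →
        ((Matrix.charmatrix (W * (1 - Matrix.diagonal s))).adjugate
            * (W * Matrix.diagonal s).map Polynomial.C :
              Matrix (Fin q) (Fin q) (Polynomial R)) j k
          = ((Matrix.charmatrix (W * (1 - Matrix.diagonal s'))).adjugate
            * (W * Matrix.diagonal s').map Polynomial.C :
              Matrix (Fin q) (Fin q) (Polynomial R)) j k := by
  -- decomposition: charmatrix (A t) = charmatrix W + (B t).map C
  have hdecomp : ∀ t : Fin q → R,
      charmatrix (W * (1 - Matrix.diagonal t))
        = charmatrix W + (W * Matrix.diagonal t).map C := by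
    intro t
    ext a b
    simp only [charmatrix, mul_sub, mul_one, RingHom.mapMatrix_apply, Matrix.add_apply,
      Matrix.sub_apply, Matrix.map_apply, map_sub]
    ring_nf
  -- key identity: adj(M t) * charmatrix W = charpoly • 1 - adj(M t) * B t
  have hid : ∀ t : Fin q → R,
      (charmatrix (W * (1 - Matrix.diagonal t))).adjugate * charmatrix W
        = (W * (1 - Matrix.diagonal t)).charpoly • (1 : Matrix (Fin q) (Fin q) (Polynomial R))
          - (charmatrix (W * (1 - Matrix.diagonal t))).adjugate
              * (W * Matrix.diagonal t).map C := by
    intro t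
    have := adjugate_mul (charmatrix (W * (1 - Matrix.diagonal t)))
    rw [Matrix.charpoly, ← this, hdecomp t, mul_add, add_sub_cancel_right]
  have hrow : ∀ k,
      ((charmatrix (W * (1 - Matrix.diagonal s))).adjugate * charmatrix W :
          Matrix (Fin q) (Fin q) (Polynomial R)) j k
        = ((charmatrix (W * (1 - Matrix.diagonal s'))).adjugate * charmatrix W :
          Matrix (Fin q) (Fin q) (Polynomial R)) j k := by
    intro k
    simp only [Matrix.mul_apply]
    exact Finset.sum_congr rfl fun i _ => by rw [adj_row_eq W j s s' hs i]
  constructor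
  · have h1 := hrow j
    rw [hid s, hid s'] at h1
    simpa [Matrix.sub_apply, Matrix.smul_apply, Matrix.one_apply, sub_eq_sub_iff_comm] using h1
  · intro k hk
    have h1 := hrow k
    rw [hid s, hid s'] at h1
    simp only [Matrix.sub_apply, Matrix.smul_apply, Matrix.one_apply_ne' hk, smul_zero,
      zero_sub, neg_inj] at h1
    exact h1
end

section
/- (Scheme on a conserved moment with the conservation absorbed into the characteristic polynomial; Eq. (above1) of the paper.) Let R be a commutative ring, q ≥ 1, A, B q×q matrices over R, and j ∈ {1,…,q}. Let m, u, g : ℤ → R^q satisfy m(n+1) = A·m(n) + B·u(n) + g(n) for all n ∈ ℤ, together with the conservation condition u(n)_j = m(n)_j for all n. Let B_j be the j-th column of B, let A′ := A + B_j·e_jᵀ, and let B′ be the matrix B with its j-th column replaced by 0. Define C_i over R (0 ≤ i ≤ q−1) entrywise as the coefficient of x^i in adj(charmatrix(A)). Then for every n ∈ ℤ: Σ_{i=0}^{q} coeff_i(charpoly(A′)) · m(n+i)_j = Σ_{i=0}^{q−1} ( C_i · ( B′·u(n+i) + g(n+i) ) )_j. -/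
open Polynomial Matrix Finset
set_option maxHeartbeats 1000000
set_option maxHeartbeats 1000000

private lemma natDegree_det_le' {R : Type*} [CommRing R] {q : ℕ}
    (M : Matrix (Fin q) (Fin q) R[X]) (d : Fin q → ℕ)
    (h : ∀ i j, (M i j).natDegree ≤ d i) : M.det.natDegree ≤ ∑ i, d i := by
  rw [Matrix.det_apply]
  refine Polynomial.natDegree_sum_le_of_forall_le _ _ fun σ _ => ?_
  rw [Units.smul_def, zsmul_eq_mul]
  refine Polynomial.natDegree_mul_le.trans ?_
  rw [Polynomial.natDegree_intCast, zero_add]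
  refine (Polynomial.natDegree_prod_le _ _).trans ?_
  calc ∑ i, (M (σ i) i).natDegree ≤ ∑ i, d (σ i) := Finset.sum_le_sum fun i _ => h _ _
    _ = ∑ i, d i := Equiv.sum_comp σ d

private lemma resolvent1 {R : Type*} [CommRing R] {q : ℕ} (_hq : 1 ≤ q)
    (M : Matrix (Fin q) (Fin q) R) (j : Fin q) (m f : ℤ → Fin q → R)
    (hrec : ∀ n : ℤ, m (n + 1) = M.mulVec (m n) + f n) (n : ℤ) :
    ∑ i ∈ Finset.range (q + 1), M.charpoly.coeff i * m (n + (i : ℤ)) j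
      = ∑ i ∈ Finset.range q,
          ((Matrix.of fun r s => ((Matrix.charmatrix M).adjugate r s).coeff i).mulVec
            (f (n + (i : ℤ)))) j := by
  set N := (Matrix.charmatrix M).adjugate with hN
  set p := M.charpoly with hp
  set Cm : ℕ → Matrix (Fin q) (Fin q) R := fun k => Matrix.of fun r s => (N r s).coeff k with hCm
  -- entrywise polynomial identity
  have hNM : ∀ a b, ∑ c, N a c * Matrix.charmatrix M c b = if a = b then p else 0 := by
    intro a b
    have h2 : (N * Matrix.charmatrix M) a b
        = ((Matrix.charmatrix M).det • (1 : Matrix (Fin q) (Fin q) R[X])) a b := by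
      rw [hN, Matrix.adjugate_mul]
    rw [Matrix.mul_apply] at h2
    rw [h2, Matrix.smul_apply, Matrix.one_apply]
    split <;> simp [hp, Matrix.charpoly]
  have hP : ∀ a b, N a b * X - ∑ c, N a c * C (M c b) = if a = b then p else 0 := by
    intro a b
    rw [← hNM a b]
    simp only [Matrix.charmatrix_apply, Matrix.diagonal_apply, mul_sub,
      Finset.sum_sub_distrib, mul_ite, mul_zero, Finset.sum_ite_eq', Finset.mem_univ, if_true]
  have hco : ∀ (a b : Fin q) (k : ℕ), (N a b * X).coeff k - ∑ c, (N a c).coeff k * M c b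
      = p.coeff k * (if a = b then 1 else 0) := by
    intro a b k
    have h := congrArg (fun r => Polynomial.coeff r k) (hP a b)
    simp only [Polynomial.coeff_sub, Polynomial.finset_sum_coeff, Polynomial.coeff_mul_C] at h
    rw [h]
    split <;> simp
  have hmat : ∀ k : ℕ, p.coeff (k + 1) • (1 : Matrix (Fin q) (Fin q) R)
      = Cm k - Cm (k + 1) * M := by
    intro k
    ext a b
    have h := hco a b (k + 1)
    rw [Polynomial.coeff_mul_X] at h
    simp only [Matrix.smul_apply, Matrix.one_apply, Matrix.sub_apply, Matrix.mul_apply, hCm,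
      Matrix.of_apply, smul_eq_mul]
    rw [← h]
  have hmat0 : p.coeff 0 • (1 : Matrix (Fin q) (Fin q) R) = -(Cm 0 * M) := by
    ext a b
    have h := hco a b 0
    rw [Polynomial.coeff_mul_X_zero, zero_sub] at h
    simp only [Matrix.smul_apply, Matrix.one_apply, Matrix.neg_apply, Matrix.mul_apply, hCm,
      Matrix.of_apply, smul_eq_mul]
    rw [← h]
  -- vanishing of top coefficient matrix
  have hCq : Cm q = 0 := by
    ext r s
    simp only [hCm, Matrix.of_apply, Matrix.zero_apply]
    apply Polynomial.coeff_eq_zero_of_natDegree_lt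
    have hdeg : (N r s).natDegree ≤ ∑ i : Fin q, (if i = s then 0 else 1) := by
      rw [hN, Matrix.adjugate_apply]
      apply natDegree_det_le'
      intro i c
      by_cases his : i = s
      · subst his
        rw [Matrix.updateRow_self, if_pos rfl]
        rcases eq_or_ne c r with h | h
        · subst h; rw [Pi.single_eq_same]; exact Polynomial.natDegree_one.le
        · rw [Pi.single_eq_of_ne h]; exact Polynomial.natDegree_zero.le
      · rw [Matrix.updateRow_ne his, if_neg his]
        rcases eq_or_ne i c with h | h
        · subst h
          rw [Matrix.charmatrix_apply_eq]
          exact (Polynomial.natDegree_sub_le _ _).trans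
            (max_le Polynomial.natDegree_X_le (by simp [Polynomial.natDegree_C]))
        · rw [Matrix.charmatrix_apply_ne _ _ _ h, Polynomial.natDegree_neg,
            Polynomial.natDegree_C]
          exact Nat.zero_le 1
    have hsum : (∑ i : Fin q, (if i = s then 0 else 1)) + 1 = q := by
      have h1 : ∀ i : Fin q, (if i = s then (0 : ℕ) else 1) + (if i = s then 1 else 0) = 1 := by
        intro i; split <;> rfl
      calc (∑ i : Fin q, (if i = s then 0 else 1)) + 1
          = ∑ i : Fin q, ((if i = s then 0 else 1) + (if i = s then 1 else 0)) := by
            rw [Finset.sum_add_distrib, Finset.sum_ite_eq' Finset.univ s fun _ => 1,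
              if_pos (Finset.mem_univ s)]
        _ = ∑ _i : Fin q, 1 := Finset.sum_congr rfl fun i _ => h1 i
        _ = q := by simp
    omega
  -- scalar row-j relations
  have hk : ∀ (k : ℕ) (v : Fin q → R),
      p.coeff (k + 1) * v j
        = ((Cm k).mulVec v) j - ((Cm (k + 1)).mulVec (M.mulVec v)) j := by
    intro k v
    have h := congrArg (fun (T : Matrix (Fin q) (Fin q) R) => T.mulVec v j) (hmat k)
    simpa [Matrix.sub_mulVec, Matrix.smul_mulVec, Matrix.one_mulVec,
      ← Matrix.mulVec_mulVec, Pi.sub_apply, Pi.smul_apply, smul_eq_mul] using h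
  have hk0 : ∀ v : Fin q → R,
      p.coeff 0 * v j = -(((Cm 0).mulVec (M.mulVec v)) j) := by
    intro v
    have h := congrArg (fun (T : Matrix (Fin q) (Fin q) R) => T.mulVec v j) hmat0
    simpa [Matrix.neg_mulVec, Matrix.smul_mulVec, Matrix.one_mulVec,
      ← Matrix.mulVec_mulVec, Pi.neg_apply, Pi.smul_apply, smul_eq_mul] using h
  have hf : ∀ x : ℤ, f x = m (x + 1) - M.mulVec (m x) := by
    intro x; rw [hrec x]; abel
  set G : ℕ → R := fun k => ((Cm k).mulVec (M.mulVec (m (n + (k : ℤ))))) j with hG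
  set S : ℕ → R := fun k => ((Cm k).mulVec (m (n + ((k + 1 : ℕ) : ℤ)))) j with hS
  have harg : ∀ k : ℕ, (n + (k : ℤ)) + 1 = n + ((k + 1 : ℕ) : ℤ) := by
    intro k; push_cast; ring
  rw [Finset.sum_range_succ']
  have hL : ∀ k ∈ Finset.range q,
      p.coeff (k + 1) * m (n + ((k + 1 : ℕ) : ℤ)) j = S k - G (k + 1) := by
    intro k _
    simp only [hS, hG]
    exact hk k (m (n + ((k + 1 : ℕ) : ℤ)))
  have hR : ∀ k ∈ Finset.range q,
      ((Cm k).mulVec (f (n + (k : ℤ)))) j = S k - G k := by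
    intro k _
    simp only [hS, hG]
    rw [hf (n + (k : ℤ)), harg k, Matrix.mulVec_sub, Pi.sub_apply]
  rw [Finset.sum_congr rfl hL, Finset.sum_congr rfl hR]
  have h0 : p.coeff 0 * m (n + ((0 : ℕ) : ℤ)) j = -(G 0) := hk0 _
  rw [h0]
  have hGq : G q = 0 := by simp [hG, hCq]
  have key : (∑ k ∈ Finset.range q, G (k + 1)) + G 0 = ∑ k ∈ Finset.range q, G k := by
    rw [← Finset.sum_range_succ' G q, Finset.sum_range_succ, hGq, add_zero]
  rw [Finset.sum_sub_distrib, Finset.sum_sub_distrib, ← key]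
  ring

private lemma det_eq_of_col {R : Type*} [CommRing R] {q : ℕ}
    (M1 M2 : Matrix (Fin q) (Fin q) R) (j s : Fin q)
    (h1 : ∀ r c, c ≠ j → M1 r c = M2 r c)
    (h2 : M1 s j = M2 s j)
    (h0 : ∀ c, c ≠ j → M1 s c = 0) :
    M1.det = M2.det := by
  rw [Matrix.det_apply, Matrix.det_apply]
  refine Finset.sum_congr rfl fun σ _ => ?_
  congr 1
  by_cases hσ : σ j = s
  · refine Finset.prod_congr rfl fun i _ => ?_
    by_cases hij : i = j
    · subst hij; rw [hσ, h2]
    · exact h1 _ _ hij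
  · have hi0 : σ.symm s ≠ j := fun h => hσ (by rw [← h, Equiv.apply_symm_apply])
    rw [Finset.prod_eq_zero (Finset.mem_univ (σ.symm s)),
        Finset.prod_eq_zero (Finset.mem_univ (σ.symm s))]
    · rw [Equiv.apply_symm_apply, ← h1 _ _ hi0, h0 _ hi0]
    · rw [Equiv.apply_symm_apply, h0 _ hi0]

private lemma adjugate_row_eq {R : Type*} [CommRing R] {q : ℕ}
    (P Q : Matrix (Fin q) (Fin q) R) (j : Fin q)
    (h : ∀ r c, c ≠ j → P r c = Q r c) (s : Fin q) :
    P.adjugate j s = Q.adjugate j s := by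
  rw [Matrix.adjugate_apply, Matrix.adjugate_apply]
  apply det_eq_of_col _ _ j s
  · intro r c hc
    by_cases hr : r = s
    · subst hr; rw [Matrix.updateRow_self, Matrix.updateRow_self]
    · rw [Matrix.updateRow_ne hr, Matrix.updateRow_ne hr]; exact h _ _ hc
  · rw [Matrix.updateRow_self, Matrix.updateRow_self]
  · intro c hc
    rw [Matrix.updateRow_self, Pi.single_eq_of_ne hc]



/-- Scheme on a conserved moment with the conservation absorbed into the characteristic
polynomial (Eq. (above1)): with `m (n+1) = A m(n) + B u(n) + g(n)` and `u(n)_j = m(n)_j`,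
letting `A' = A + B_j·e_jᵀ` and `B'` be `B` with its `j`-th column replaced by `0`,
`∑_{i=0}^{q} coeff_i(charpoly A') · m(n+i)_j
   = ∑_{i=0}^{q-1} ( C_i · (B'·u(n+i) + g(n+i)) )_j`,
where `C_i` is the matrix of `x^i`-coefficients of the entries of `adj(charmatrix A)`. -/
theorem conserved_moment_scheme {R : Type*} [CommRing R] {q : ℕ} (hq : 1 ≤ q)
    (A B : Matrix (Fin q) (Fin q) R) (j : Fin q) (m u g : ℤ → Fin q → R)
    (hrec : ∀ n : ℤ, m (n + 1) = A.mulVec (m n) + B.mulVec (u n) + g n)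
    (hcons : ∀ n : ℤ, u n j = m n j) :
    ∀ n : ℤ,
      ∑ i ∈ Finset.range (q + 1),
          (A + Matrix.of fun i' k => if k = j then B i' j else 0).charpoly.coeff i
            * m (n + (i : ℤ)) j
        = ∑ i ∈ Finset.range q,
            ((Matrix.of fun r s => ((Matrix.charmatrix A).adjugate r s).coeff i).mulVec
              ((B.updateCol j fun _ => 0).mulVec (u (n + (i : ℤ))) + g (n + (i : ℤ)))) j := by
  intro n
  set E : Matrix (Fin q) (Fin q) R := Matrix.of fun i' k => if k = j then B i' j else 0 with hE
  set B' : Matrix (Fin q) (Fin q) R := B.updateCol j fun _ => 0 with hB'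
  have hrec' : ∀ x : ℤ, m (x + 1) = (A + E).mulVec (m x) + (B'.mulVec (u x) + g x) := by
    intro x
    rw [hrec x]
    funext i'
    have hEm : E.mulVec (m x) i' = B i' j * u x j := by
      simp only [hE, Matrix.mulVec, dotProduct, Matrix.of_apply, ite_mul, zero_mul]
      rw [Finset.sum_ite_eq' Finset.univ j fun k => B i' j * m x k,
        if_pos (Finset.mem_univ j), hcons x]
    have key : B.mulVec (u x) i' = E.mulVec (m x) i' + B'.mulVec (u x) i' := by
      rw [hEm]
      simp only [hB', Matrix.mulVec, dotProduct, Matrix.updateCol_apply,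
        ite_mul, zero_mul]
      have split : ∀ k : Fin q, B i' k * u x k
          = (if k = j then B i' j * u x j else 0) + (if k = j then 0 else B i' k * u x k) := by
        intro k
        by_cases h : k = j
        · subst h; simp
        · simp [h]
      calc ∑ k, B i' k * u x k
          = ∑ k, ((if k = j then B i' j * u x j else 0)
              + (if k = j then 0 else B i' k * u x k)) :=
            Finset.sum_congr rfl fun k _ => split k
        _ = B i' j * u x j + ∑ k, (if k = j then 0 else B i' k * u x k) := by
            rw [Finset.sum_add_distrib,
              Finset.sum_ite_eq' Finset.univ j fun _ => B i' j * u x j,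
              if_pos (Finset.mem_univ j)]
    simp only [Pi.add_apply, Matrix.add_mulVec]
    rw [key]
    ring
  have hres := resolvent1 hq (A + E) j m (fun x => B'.mulVec (u x) + g x) hrec' n
  rw [hres]
  have hadj : ∀ s, (Matrix.charmatrix (A + E)).adjugate j s
      = (Matrix.charmatrix A).adjugate j s := by
    intro s
    apply adjugate_row_eq
    intro r c hc
    rw [Matrix.charmatrix_apply, Matrix.charmatrix_apply]
    simp [hE, Matrix.add_apply, hc]
  refine Finset.sum_congr rfl fun i _ => ?_
  simp only [Matrix.mulVec, dotProduct, Matrix.of_apply, hadj]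
end

section
/- (Proposition 2, multilevel sum form of the GPMFD scheme on the j-th of N conservative moments.) Let R be a commutative ring, q ≥ 1, 1 ≤ N ≤ q, j ∈ {1,…,N}, A a q×q matrix over R, P_j := Σ_{l ∈ {j} ∪ {N+1,…,q}} e_l·e_lᵀ, Ã_j := A·P_j, Ā_j := A − Ã_j. Define γ_{j,k} for k = 1,…,q+2−N as the coefficient of x^{k+N−2} in charpoly(Ã_j); since Ã_j has zero columns at all indices in {1,…,N}\{j} (N−1 zero columns), one indeed has charpoly(Ã_j) = Σ_{k=1}^{q+2−N} γ_{j,k}·x^{k+N−2}, and γ_{j,q+2−N} = 1. Suppose m, b : ℤ → R^q satisfy m(n+1) = A·m(n) + b(n) for all n ∈ ℤ. Then for every n ∈ ℤ: m(n+1)_j = − Σ_{k=1}^{q+1−N} γ_{j,k} · m(n+N+k−1−q)_j + Σ_{k=1}^{q+1−N} Σ_{l=1}^{k} γ_{j,q+2−N+l−k} · ( Ã_j^{l−1} · ( Ā_j·m(n−k+1) + b(n−k+1) ) )_j. -/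
/-- The projection matrix `P_j = ∑_{l ∈ {j} ∪ {N+1,…,q}} e_l e_lᵀ` (0-based: the diagonal
0/1 matrix selecting the `j`-th coordinate and the coordinates of index `≥ N`). -/
def gpmfdProj (R : Type*) [CommRing R] {q : ℕ} (N : ℕ) (j : Fin q) :
    Matrix (Fin q) (Fin q) R :=
  Matrix.diagonal fun l : Fin q => if l = j ∨ N ≤ (l : ℕ) then 1 else 0

open Matrix Polynomial Finset

section
variable {R : Type*} [CommRing R] {q N : ℕ}

lemma proj_idem (N : ℕ) (j : Fin q) :
    gpmfdProj R N j * gpmfdProj R N j = gpmfdProj R N j := by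
  ext i k
  simp only [gpmfdProj, diagonal_mul_diagonal, diagonal_apply]
  rcases eq_or_ne i k with rfl | h
  · by_cases h2 : i = j ∨ N ≤ (i : ℕ) <;> simp [h2]
  · simp [h]

lemma hcol (j : Fin q) (A : Matrix (Fin q) (Fin q) R) (c : Fin q)
    (hc : ¬ (c = j ∨ N ≤ (c : ℕ))) (x : Fin q) : (A * gpmfdProj R N j) x c = 0 := by
  simp [gpmfdProj, Matrix.mul_apply, Matrix.diagonal_apply, hc, Finset.sum_ite_eq]

end

section
variable {R : Type*} [CommRing R] {q N : ℕ}

lemma keyA [Nontrivial R] (hN1 : 1 ≤ N) (hNq : N ≤ q) (j : Fin q) (hj : (j : ℕ) < N)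
    (A : Matrix (Fin q) (Fin q) R) (v : Fin q → R) :
    ∑ k ∈ Finset.Icc 1 (q + 2 - N),
      (A * gpmfdProj R N j).charpoly.coeff (k + N - 2)
        * (((A * gpmfdProj R N j) ^ (k - 1)).mulVec v) j = 0 := by
  classical
  set P := gpmfdProj R N j with hP
  set At := A * P with hAt
  set p : Fin q → Prop := fun l => l = j ∨ N ≤ (l : ℕ) with hp
  set D : Matrix {l // p l} {l // p l} R := At.submatrix Subtype.val Subtype.val with hD
  -- restriction of mulVec
  have hrestrict : ∀ u : Fin q → R,
      (fun t : {l // p l} => At.mulVec u t.val) = D.mulVec (fun t : {l // p l} => u t.val) := by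
    intro u
    funext t
    show ∑ c : Fin q, At t.val c * u c = ∑ c : {l // p l}, D t c * u c.val
    rw [← Finset.sum_filter_add_sum_filter_not Finset.univ p]
    have h2 : ∑ c ∈ Finset.univ.filter (fun c => ¬ p c), At t.val c * u c = 0 := by
      refine Finset.sum_eq_zero fun c hc => ?_
      have hc' : ¬ p c := by simpa using (Finset.mem_filter.mp hc).2
      show (A * gpmfdProj R N j) (↑t) c * u c = 0
      rw [hcol j A c hc', zero_mul]
    rw [h2, add_zero]
    rw [Finset.sum_subtype (p := p) _ (fun x => by simp) (fun c => At t.val c * u c)]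
    rfl
  have hpow : ∀ (k : ℕ) (u : Fin q → R),
      (fun t : {l // p l} => (At ^ k).mulVec u t.val)
        = (D ^ k).mulVec (fun t : {l // p l} => u t.val) := by
    intro k
    induction k with
    | zero => intro u; simp [Matrix.one_mulVec]
    | succ k ih =>
      intro u
      have : (At ^ (k+1)).mulVec u = At.mulVec ((At ^ k).mulVec u) := by
        rw [Matrix.mulVec_mulVec, ← pow_succ']
      rw [this, hrestrict, ih, Matrix.mulVec_mulVec, ← pow_succ']
  -- cardinalities
  have cardlt : Fintype.card {l : Fin q // (l : ℕ) < N} = N := by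
    have e2 : {l : Fin q // (l : ℕ) < N} ≃ Fin N :=
      ⟨fun x => ⟨x.1, x.2⟩, fun i => ⟨⟨i, lt_of_lt_of_le i.2 hNq⟩, i.2⟩,
        fun x => rfl, fun i => rfl⟩
    rw [Fintype.card_congr e2, Fintype.card_fin]
  have hdisj : Disjoint (fun l : Fin q => l = j) (fun l : Fin q => N ≤ (l : ℕ)) := by
    rw [disjoint_iff_inf_le]
    intro l hl
    have h1 : l = j ∧ N ≤ (l : ℕ) := hl
    exact absurd h1.2 (by rw [h1.1]; omega)
  have hcardT : Fintype.card {l // p l} = q + 1 - N := by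
    have h2 : Fintype.card {l : Fin q // N ≤ (l : ℕ)} = q - N := by
      have hcompl := Fintype.card_subtype_compl (fun l : Fin q => (l : ℕ) < N)
      simp only [not_lt] at hcompl
      rw [hcompl, cardlt, Fintype.card_fin]
    have h1 := Fintype.card_subtype_or_disjoint (fun l : Fin q => l = j)
      (fun l => N ≤ (l : ℕ)) hdisj
    rw [Fintype.card_subtype_eq, h2] at h1
    have h3 : Fintype.card {l // p l} = Fintype.card {l : Fin q // l = j ∨ N ≤ (l : ℕ)} :=
      Fintype.card_congr (Equiv.subtypeEquivRight fun l => Iff.rfl)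
    omega
  have hcardS : Fintype.card {l // ¬ p l} = N - 1 := by
    rw [Fintype.card_subtype_compl, Fintype.card_fin, hcardT]
    omega
  -- block decomposition
  let e : {l // ¬ p l} ⊕ {l // p l} ≃ Fin q := (Equiv.sumComm _ _).trans (Equiv.sumCompl p)
  have hblock : (Matrix.reindex e.symm e.symm At)
      = Matrix.fromBlocks 0 (At.submatrix Subtype.val Subtype.val) 0 D := by
    ext x y
    cases x with
    | inl s =>
      cases y with
      | inl s' =>
        show At s.val s'.val = 0
        exact hcol j A s'.val s'.2 s.val
      | inr t => rfl
    | inr t =>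
      cases y with
      | inl s' =>
        show At t.val s'.val = 0
        exact hcol j A s'.val s'.2 t.val
      | inr t' => rfl
  have hfact : At.charpoly = Polynomial.X ^ (N - 1) * D.charpoly := by
    have h1 := Matrix.charpoly_reindex e.symm At
    rw [← h1, hblock, Matrix.charpoly_fromBlocks_zero₂₁]
    congr 1
    have hcm : Matrix.charmatrix (0 : Matrix {l // ¬ p l} {l // ¬ p l} R)
        = Matrix.diagonal (fun _ => (Polynomial.X : Polynomial R)) := by
      ext i k
      rcases eq_or_ne i k with rfl | h
      · simp
      · simp [Matrix.charmatrix_apply_ne _ _ _ h, Matrix.diagonal_apply_ne _ h]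
    rw [Matrix.charpoly, hcm, Matrix.det_diagonal, Finset.prod_const, Finset.card_univ, hcardS]
  have hdeg : D.charpoly.natDegree = q + 1 - N := by
    rw [Matrix.charpoly_natDegree_eq_dim, hcardT]
  set w : {l // p l} → R := fun t => v t.val with hw
  have hj' : p j := Or.inl rfl
  set j' : {l // p l} := ⟨j, hj'⟩ with hj'def
  have step1 : ∀ k ∈ Finset.Icc 1 (q + 2 - N),
      At.charpoly.coeff (k + N - 2) * ((At ^ (k - 1)).mulVec v) j
        = D.charpoly.coeff (k - 1) * ((D ^ (k - 1)).mulVec w) j' := by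
    intro k hk
    have hk1 : 1 ≤ k := (Finset.mem_Icc.mp hk).1
    have hcoeff : At.charpoly.coeff (k + N - 2) = D.charpoly.coeff (k - 1) := by
      rw [hfact]
      have h4 : k + N - 2 = (k - 1) + (N - 1) := by omega
      rw [h4, Polynomial.coeff_X_pow_mul]
    have hv : ((At ^ (k - 1)).mulVec v) j = ((D ^ (k - 1)).mulVec w) j' :=
      congrFun (hpow (k - 1) v) j'
    rw [hcoeff, hv]
  rw [Finset.sum_congr rfl step1]
  have step2 : ∑ k ∈ Finset.Icc 1 (q + 2 - N),
      D.charpoly.coeff (k - 1) * ((D ^ (k - 1)).mulVec w) j'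
      = ∑ i ∈ Finset.range (q + 2 - N),
          D.charpoly.coeff i * ((D ^ i).mulVec w) j' := by
    refine Finset.sum_bij' (fun k _ => k - 1) (fun i _ => i + 1) ?_ ?_ ?_ ?_ ?_
    · intro a ha
      simp only [Finset.mem_Icc] at ha
      simp only [Finset.mem_range]
      omega
    · intro a ha
      simp only [Finset.mem_range] at ha
      simp only [Finset.mem_Icc]
      omega
    · intro a ha
      simp only [Finset.mem_Icc] at ha
      omega
    · intro a ha
      simp only [Finset.mem_range] at ha
      omega
    · intro a ha
      rfl
  rw [step2]
  have step3 : ∑ i ∈ Finset.range (q + 2 - N),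
      D.charpoly.coeff i * ((D ^ i).mulVec w) j'
      = (((Polynomial.aeval D) D.charpoly).mulVec w) j' := by
    rw [Polynomial.aeval_eq_sum_range' (n := q + 2 - N) (by omega)]
    simp only [Matrix.mulVec, dotProduct, Finset.sum_apply, Matrix.sum_apply,
      Matrix.smul_apply, smul_eq_mul, Finset.sum_mul, Finset.mul_sum]
    rw [Finset.sum_comm]
    simp only [mul_assoc]
  rw [step3, Matrix.aeval_self_charpoly]
  simp

end

section
variable {R : Type*} [CommRing R] {q N : ℕ}

lemma iterLemma (At : Matrix (Fin q) (Fin q) R) (m d : ℤ → Fin q → R)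
    (h : ∀ t : ℤ, m (t + 1) = At.mulVec (m t) + d t) :
    ∀ (s : ℕ) (t : ℤ), m (t + (s : ℤ))
      = (At ^ s).mulVec (m t)
        + ∑ i ∈ Finset.range s, (At ^ (s - 1 - i)).mulVec (d (t + (i : ℤ))) := by
  intro s
  induction s with
  | zero => intro t; simp [Matrix.one_mulVec]
  | succ s ih =>
    intro t
    have h1 : (t + ((s + 1 : ℕ) : ℤ)) = (t + (s : ℤ)) + 1 := by push_cast; ring
    rw [h1, h (t + (s : ℤ)), ih t, Matrix.mulVec_add, Matrix.mulVec_mulVec, ← pow_succ']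
    have h2 : At.mulVec (∑ i ∈ Finset.range s, (At ^ (s - 1 - i)).mulVec (d (t + (i : ℤ))))
        = ∑ i ∈ Finset.range s, (At ^ (s + 1 - 1 - i)).mulVec (d (t + (i : ℤ))) := by
      have h3 := map_sum At.mulVecLin
        (fun i => (At ^ (s - 1 - i)).mulVec (d (t + (i : ℤ)))) (Finset.range s)
      simp only [Matrix.mulVecLin_apply] at h3
      rw [h3]
      refine Finset.sum_congr rfl fun i hi => ?_
      simp only [Finset.mem_range] at hi
      rw [Matrix.mulVec_mulVec, ← pow_succ']
      have h5 : s - 1 - i + 1 = s + 1 - 1 - i := by omega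
      rw [h5]
    rw [h2, Finset.sum_range_succ]
    have h4 : s + 1 - 1 - s = 0 := by omega
    rw [h4, pow_zero, Matrix.one_mulVec]
    abel

end

/-- Proposition 2 (multilevel sum form of the GPMFD scheme on the `j`-th of `N` conservative
moments): with `Ã_j = A·P_j`, `Ā_j = A - Ã_j`, `γ_{j,k} = coeff_{k+N-2}(charpoly Ã_j)`, and
`m (n+1) = A m(n) + b(n)`, one has
`m(n+1)_j = - ∑_{k=1}^{q+1-N} γ_{j,k} m(n+N+k-1-q)_j
  + ∑_{k=1}^{q+1-N} ∑_{l=1}^{k} γ_{j,q+2-N+l-k} (Ã_j^{l-1}·(Ā_j·m(n-k+1)+b(n-k+1)))_j`. -/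
theorem gpmfd_multilevel_scheme_N_conserved {R : Type*} [CommRing R] {q N : ℕ}
    (hq : 1 ≤ q) (hN1 : 1 ≤ N) (hNq : N ≤ q) (j : Fin q) (hj : (j : ℕ) < N)
    (A : Matrix (Fin q) (Fin q) R) (m b : ℤ → Fin q → R)
    (hrec : ∀ n : ℤ, m (n + 1) = A.mulVec (m n) + b n) :
    ∀ n : ℤ,
      m (n + 1) j
        = -(∑ k ∈ Finset.Icc 1 (q + 1 - N),
              (A * gpmfdProj R N j).charpoly.coeff (k + N - 2)
                * m (n + (N : ℤ) + (k : ℤ) - 1 - (q : ℤ)) j)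
          + ∑ k ∈ Finset.Icc 1 (q + 1 - N), ∑ l ∈ Finset.Icc 1 k,
              (A * gpmfdProj R N j).charpoly.coeff ((q + 2 - N + l - k) + N - 2)
                * (((A * gpmfdProj R N j) ^ (l - 1)).mulVec
                    ((A - A * gpmfdProj R N j).mulVec (m (n - (k : ℤ) + 1))
                      + b (n - (k : ℤ) + 1))) j := by
  rcases subsingleton_or_nontrivial R with hR | hR
  · intro n; exact Subsingleton.elim _ _
  intro n
  set At := A * gpmfdProj R N j with hAt
  set d : ℤ → Fin q → R := fun t => (A - At).mulVec (m t) + b t with hd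
  have hstep : ∀ t : ℤ, m (t + 1) = At.mulVec (m t) + d t := by
    intro t
    rw [hrec t, hd]
    simp only [Matrix.sub_mulVec]
    abel
  have hiter := iterLemma At m d hstep
  set n0 : ℤ := n + 1 - ((q + 1 - N : ℕ) : ℤ) with hn0
  have hkey : ∑ k ∈ Finset.Icc 1 (q + 2 - N),
        At.charpoly.coeff (k + N - 2) * m (n0 + ((k - 1 : ℕ) : ℤ)) j
      = ∑ k ∈ Finset.Icc 1 (q + 2 - N), ∑ i ∈ Finset.range (k - 1),
          At.charpoly.coeff (k + N - 2) * ((At ^ (k - 1 - 1 - i)).mulVec (d (n0 + (i : ℤ)))) j := by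
    have expand : ∀ k ∈ Finset.Icc 1 (q + 2 - N),
        At.charpoly.coeff (k + N - 2) * m (n0 + ((k - 1 : ℕ) : ℤ)) j
          = At.charpoly.coeff (k + N - 2) * ((At ^ (k - 1)).mulVec (m n0)) j
            + ∑ i ∈ Finset.range (k - 1),
                At.charpoly.coeff (k + N - 2) * ((At ^ (k - 1 - 1 - i)).mulVec (d (n0 + (i : ℤ)))) j := by
      intro k hk
      rw [hiter (k - 1) n0]
      simp only [Pi.add_apply, Finset.sum_apply, mul_add, Finset.mul_sum]
    rw [Finset.sum_congr rfl expand, Finset.sum_add_distrib,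
      keyA hN1 hNq j hj A (m n0), zero_add]
  -- split the top term from the left side of hkey
  have htopidx : q + 2 - N = (q + 1 - N) + 1 := by omega
  have hsplit : ∑ k ∈ Finset.Icc 1 (q + 2 - N),
        At.charpoly.coeff (k + N - 2) * m (n0 + ((k - 1 : ℕ) : ℤ)) j
      = (∑ k ∈ Finset.Icc 1 (q + 1 - N),
          At.charpoly.coeff (k + N - 2) * m (n0 + ((k - 1 : ℕ) : ℤ)) j)
        + At.charpoly.coeff ((q + 1 - N + 1) + N - 2) * m (n0 + ((q + 1 - N + 1 - 1 : ℕ) : ℤ)) j := by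
    rw [htopidx, Finset.sum_Icc_succ_top (by omega)]
  have hgamma_top : At.charpoly.coeff ((q + 1 - N + 1) + N - 2) = 1 := by
    have hdg : At.charpoly.natDegree = q := by
      rw [Matrix.charpoly_natDegree_eq_dim, Fintype.card_fin]
    have hidx : (q + 1 - N + 1) + N - 2 = q := by omega
    rw [hidx]
    have hmon := (Matrix.charpoly_monic At).coeff_natDegree
    rwa [hdg] at hmon
  have htop_time : n0 + ((q + 1 - N + 1 - 1 : ℕ) : ℤ) = n + 1 := by
    rw [hn0]
    have : (q + 1 - N + 1 - 1 : ℕ) = q + 1 - N := by omega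
    rw [this]
    ring
  -- times in the first sum
  have htime : ∀ k ∈ Finset.Icc 1 (q + 1 - N),
      At.charpoly.coeff (k + N - 2) * m (n0 + ((k - 1 : ℕ) : ℤ)) j
        = At.charpoly.coeff (k + N - 2) * m (n + (N : ℤ) + (k : ℤ) - 1 - (q : ℤ)) j := by
    intro k hk
    simp only [Finset.mem_Icc] at hk
    congr 2
    rw [hn0]
    omega
  -- the double sum
  have hdouble : ∑ k ∈ Finset.Icc 1 (q + 2 - N), ∑ i ∈ Finset.range (k - 1),
        At.charpoly.coeff (k + N - 2) * ((At ^ (k - 1 - 1 - i)).mulVec (d (n0 + (i : ℤ)))) j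
      = ∑ k ∈ Finset.Icc 1 (q + 1 - N), ∑ l ∈ Finset.Icc 1 k,
          At.charpoly.coeff ((q + 2 - N + l - k) + N - 2)
            * ((At ^ (l - 1)).mulVec (d (n - (k : ℤ) + 1))) j := by
    rw [Finset.sum_sigma' (Finset.Icc 1 (q + 2 - N)) (fun k => Finset.range (k - 1))
      (fun k i => At.charpoly.coeff (k + N - 2) * ((At ^ (k - 1 - 1 - i)).mulVec (d (n0 + (i : ℤ)))) j)]
    rw [Finset.sum_sigma' (Finset.Icc 1 (q + 1 - N)) (fun k => Finset.Icc 1 k)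
      (fun k l => At.charpoly.coeff ((q + 2 - N + l - k) + N - 2)
            * ((At ^ (l - 1)).mulVec (d (n - (k : ℤ) + 1))) j)]
    refine Finset.sum_bij' (fun x _ => ⟨q + 1 - N - x.2, x.1 - 1 - x.2⟩)
      (fun y _ => ⟨y.2 + 1 + (q + 1 - N - y.1), q + 1 - N - y.1⟩) ?_ ?_ ?_ ?_ ?_
    · rintro ⟨k, i⟩ hx
      simp only [Finset.mem_sigma, Finset.mem_Icc, Finset.mem_range] at hx ⊢
      omega
    · rintro ⟨k, l⟩ hy
      simp only [Finset.mem_sigma, Finset.mem_Icc, Finset.mem_range] at hy ⊢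
      omega
    · rintro ⟨k, i⟩ hx
      simp only [Finset.mem_sigma, Finset.mem_Icc, Finset.mem_range] at hx
      have h1 : q + 1 - N - (q + 1 - N - i) = i := by omega
      simp only [h1]
      have h2 : k - 1 - i + 1 + i = k := by omega
      simp only [h2]
    · rintro ⟨k, l⟩ hy
      simp only [Finset.mem_sigma, Finset.mem_Icc, Finset.mem_range] at hy
      have h1 : q + 1 - N - (q + 1 - N - k) = k := by omega
      have h2 : l + 1 + (q + 1 - N - k) - 1 - (q + 1 - N - k) = l := by omega
      simp only [h2, h1]
    · rintro ⟨k, i⟩ hx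
      simp only [Finset.mem_sigma, Finset.mem_Icc, Finset.mem_range] at hx
      have h1 : (q + 2 - N + (k - 1 - i) - (q + 1 - N - i)) + N - 2 = k + N - 2 := by omega
      have h2 : k - 1 - 1 - i = (k - 1 - i) - 1 := by omega
      have h3 : n0 + (i : ℤ) = n - ((q + 1 - N - i : ℕ) : ℤ) + 1 := by
        rw [hn0]; omega
      simp only [h1, h2, h3]
  -- assemble
  have hfinal := hkey
  rw [hsplit, hgamma_top, htop_time, one_mul, hdouble, Finset.sum_congr rfl htime] at hfinal
  simp only [hd] at hfinal
  linear_combination hfinal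
end

section
/- (Proposition 3, reduced multilevel GPMFD scheme.) Let R be a commutative ring, q = N + r with N ≥ 1 and r ≥ 0, W a q×q matrix over R, S_r an r×r matrix over R, Ŝ the block-diagonal q×q matrix with blocks I_N and S_r, and A := W·(I_q − Ŝ). Let γ_k denote the coefficient of x^{k−1} in charpoly(A) for k = 1,…,q+1 (γ_{q+1} = 1). Suppose m, b : ℤ → R^q satisfy m(n+1) = A·m(n) + b(n) for all n ∈ ℤ. Then for every j ∈ {1,…,N} and every n ∈ ℤ: m(n+1)_j = − Σ_{k=N}^{q} γ_k · m(n+k−q)_j + Σ_{k=N}^{q} Σ_{l=N}^{k} γ_{q+1+l−k} · ( A^{l−N} · b(n−k+N) )_j; in fact the corresponding vector identity holds in every component. This is the (q+2−N)-level finite-difference scheme on the conservative moments of the GPMRT-LB model whose relaxation matrix fixes the first N moments. -/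
open Matrix Polynomial Finset

private lemma my_sum_mulVec {R : Type*} [CommRing R] {p : Type*} [Fintype p]
    (s : Finset ℕ) (f : ℕ → Matrix p p R) (v : p → R) :
    (∑ i ∈ s, f i).mulVec v = ∑ i ∈ s, (f i).mulVec v := by
  induction s using Finset.cons_induction with
  | empty => simp [Matrix.zero_mulVec]
  | cons a s ha ih => simp only [Finset.sum_cons, Matrix.add_mulVec, ih]

private lemma my_sum_Icc {M : Type*} [AddCommMonoid M] (N n : ℕ) (f : ℕ → M) :
    ∑ k ∈ Finset.Icc N (N + n), f k = ∑ j ∈ Finset.range (n + 1), f (N + j) := by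
  apply Finset.sum_nbij' (fun k => k - N) (fun j => N + j) <;>
    simp +contextual [Finset.mem_Icc, Finset.mem_range] <;> omega

private lemma my_fromBlocks_sum {R : Type*} [CommRing R] {p q : Type*}
    (s : Finset ℕ) (f : ℕ → Matrix p p R) (g : ℕ → Matrix p q R) (h : ℕ → Matrix q p R)
    (k : ℕ → Matrix q q R) :
    ∑ i ∈ s, Matrix.fromBlocks (f i) (g i) (h i) (k i)
      = Matrix.fromBlocks (∑ i ∈ s, f i) (∑ i ∈ s, g i) (∑ i ∈ s, h i) (∑ i ∈ s, k i) := by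
  ext (a|a) (c|c) <;> simp [Matrix.sum_apply]

private lemma my_unroll {R : Type*} [CommRing R] {ι : Type*} [Fintype ι] [DecidableEq ι]
    (A : Matrix ι ι R) (m b : ℤ → ι → R)
    (hrec : ∀ n : ℤ, m (n + 1) = A.mulVec (m n) + b n) (t : ℕ) (n : ℤ) :
    m (n + 1) = (A ^ t).mulVec (m (n + 1 - t))
      + ∑ i ∈ Finset.range t, (A ^ i).mulVec (b (n - i)) := by
  induction t with
  | zero => simp
  | succ t ih =>
    have h1 : m (n + 1 - t) = A.mulVec (m (n - t)) + b (n - t) := by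
      have h := hrec (n - t)
      rw [show (n : ℤ) - t + 1 = n + 1 - t by ring] at h
      exact h
    have hc : (n + 1 - ((t + 1 : ℕ) : ℤ)) = n - t := by push_cast; ring
    rw [hc, Finset.sum_range_succ, pow_succ, ih, h1, Matrix.mulVec_add,
      ← Matrix.mulVec_mulVec]
    abel

/-- Proposition 3 (reduced multilevel GPMFD scheme): with `q = N + r`, `Ŝ` block-diagonal with
blocks `I_N` and `S_r`, `A = W(I - Ŝ)`, `γ_k = coeff_{k-1}(charpoly A)`, and
`m (n+1) = A m(n) + b(n)`, for every `n`:
`m(n+1) = - ∑_{k=N}^{q} γ_k • m(n+k-q)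
          + ∑_{k=N}^{q} ∑_{l=N}^{k} γ_{q+1+l-k} • A^{l-N} ⬝ b(n-k+N)`
(a vector identity, holding in every component, in particular on each of the first `N`
(conservative) components). -/
theorem gpmfd_reduced_multilevel_scheme {R : Type*} [CommRing R] {N r : ℕ} (hN : 1 ≤ N)
    (W : Matrix (Fin N ⊕ Fin r) (Fin N ⊕ Fin r) R) (Sr : Matrix (Fin r) (Fin r) R)
    (A : Matrix (Fin N ⊕ Fin r) (Fin N ⊕ Fin r) R)
    (hA : A = W * (1 - Matrix.fromBlocks 1 0 0 Sr))
    (m b : ℤ → (Fin N ⊕ Fin r) → R)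
    (hrec : ∀ n : ℤ, m (n + 1) = A.mulVec (m n) + b n) :
    ∀ n : ℤ,
      m (n + 1)
        = -(∑ k ∈ Finset.Icc N (N + r),
              A.charpoly.coeff (k - 1) • m (n + (k : ℤ) - ((N + r : ℕ) : ℤ)))
          + ∑ k ∈ Finset.Icc N (N + r), ∑ l ∈ Finset.Icc N k,
              A.charpoly.coeff (N + r + 1 + l - k - 1) •
                (A ^ (l - N)).mulVec (b (n - (k : ℤ) + (N : ℤ))) := by
  rcases subsingleton_or_nontrivial R with hR | hR
  · intro n; funext x; exact Subsingleton.elim _ _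
  intro n
  set B := W.toBlocks₁₂ * (1 - Sr) with hB
  set Cm := W.toBlocks₂₂ * (1 - Sr) with hCm
  -- block structure of A
  have hAblock : A = Matrix.fromBlocks 0 B 0 Cm := by
    rw [hA]
    have h1 : (1 : Matrix (Fin N ⊕ Fin r) (Fin N ⊕ Fin r) R) - Matrix.fromBlocks 1 0 0 Sr
        = Matrix.fromBlocks 0 0 0 (1 - Sr) := by
      rw [← Matrix.fromBlocks_one]
      ext (a|a) (c|c) <;> simp [Matrix.one_apply]
    rw [h1]
    nth_rewrite 1 [← Matrix.fromBlocks_toBlocks W]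
    rw [Matrix.fromBlocks_multiply]
    simp
    exact ⟨hB.symm, hCm.symm⟩
  have hpow : ∀ k : ℕ, A ^ (k + 1) = Matrix.fromBlocks 0 (B * Cm ^ k) 0 (Cm ^ (k + 1)) := by
    intro k
    rw [hAblock]
    induction k with
    | zero => simp
    | succ k ih =>
      rw [pow_succ, ih, Matrix.fromBlocks_multiply]
      simp only [pow_succ]
      simp
      exact Matrix.mul_assoc B (Cm ^ k) Cm
  -- charpoly factorization
  have hcp : A.charpoly = X ^ N * Cm.charpoly := by
    rw [hAblock, Matrix.charpoly_fromBlocks_zero₂₁]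
    congr 1
    simp [Matrix.charpoly, charmatrix, Matrix.det_smul]
  have hc : ∀ k : ℕ, A.charpoly.coeff k = if N ≤ k then Cm.charpoly.coeff (k - N) else 0 := by
    intro k; rw [hcp, mul_comm, Polynomial.coeff_mul_X_pow']
  have hdeg : Cm.charpoly.natDegree = r := by
    simpa using Matrix.charpoly_natDegree_eq_dim Cm
  have hmon : Cm.charpoly.coeff r = 1 := by
    have h := (Matrix.charpoly_monic Cm).coeff_natDegree
    rwa [hdeg] at h
  have hcN : A.charpoly.coeff (N + r) = 1 := by
    rw [hc]; rw [if_pos (by omega)]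
    rw [show N + r - N = r by omega, hmon]
  have hc0 : A.charpoly.coeff (N + 0 - 1) = 0 := by
    rw [hc]; rw [if_neg (by omega)]
  have hci : ∀ i : ℕ, A.charpoly.coeff (N + (i + 1) - 1) = Cm.charpoly.coeff i := by
    intro i
    rw [hc, if_pos (by omega)]
    congr 1; omega
  -- Cayley-Hamilton kernel identity
  have hCH : ∑ i ∈ Finset.range (r + 1), Cm.charpoly.coeff i • Cm ^ i = 0 := by
    have h := Matrix.aeval_self_charpoly Cm
    rwa [Polynomial.aeval_eq_sum_range' (n := r + 1) (by rw [hdeg]; omega)] at h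
  have hker : ∑ i ∈ Finset.range (r + 1), Cm.charpoly.coeff i • A ^ (i + 1) = 0 := by
    calc ∑ i ∈ Finset.range (r + 1), Cm.charpoly.coeff i • A ^ (i + 1)
        = ∑ i ∈ Finset.range (r + 1),
            Matrix.fromBlocks 0 (B * (Cm.charpoly.coeff i • Cm ^ i)) 0
              (Cm * (Cm.charpoly.coeff i • Cm ^ i)) := by
          refine Finset.sum_congr rfl fun i _ => ?_
          rw [hpow i]
          ext (a|a) (c|c) <;>
            simp [Matrix.mul_smul, pow_succ', Matrix.smul_apply]
      _ = Matrix.fromBlocks 0 (B * ∑ i ∈ Finset.range (r + 1), Cm.charpoly.coeff i • Cm ^ i) 0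
            (Cm * ∑ i ∈ Finset.range (r + 1), Cm.charpoly.coeff i • Cm ^ i) := by
          rw [my_fromBlocks_sum, ← Matrix.mul_sum, ← Matrix.mul_sum]
          simp
      _ = 0 := by rw [hCH]; simp
  -- the key matrix identity
  have hK : (∑ j ∈ Finset.range (r + 1), A.charpoly.coeff (N + j - 1) • A ^ j) = -(A ^ (r + 1)) := by
    have hsum1 : ∑ j ∈ Finset.range (r + 1), A.charpoly.coeff (N + j - 1) • A ^ j
        = ∑ i ∈ Finset.range r, Cm.charpoly.coeff i • A ^ (i + 1) := by
      rw [Finset.sum_range_succ']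
      rw [hc0, zero_smul, add_zero]
      exact Finset.sum_congr rfl fun i _ => by rw [hci i]
    have h2 := hker
    rw [Finset.sum_range_succ, hmon, one_smul] at h2
    rw [hsum1]
    exact eq_neg_of_add_eq_zero_left h2
  -- canonical forms of the two sums in the goal
  have hT1 : ∑ k ∈ Finset.Icc N (N + r),
        A.charpoly.coeff (k - 1) • m (n + (k : ℤ) - ((N + r : ℕ) : ℤ))
      = ∑ j ∈ Finset.range (r + 1), A.charpoly.coeff (N + j - 1) • m (n + (j : ℤ) - (r : ℤ)) := by
    rw [my_sum_Icc]
    refine Finset.sum_congr rfl fun j _ => ?_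
    congr 1
    push_cast; ring
  have hT2 : ∑ k ∈ Finset.Icc N (N + r), ∑ l ∈ Finset.Icc N k,
        A.charpoly.coeff (N + r + 1 + l - k - 1) •
          (A ^ (l - N)).mulVec (b (n - (k : ℤ) + (N : ℤ)))
      = ∑ j ∈ Finset.range (r + 1), ∑ i ∈ Finset.range (j + 1),
          A.charpoly.coeff (N + r + i - j) • (A ^ i).mulVec (b (n - (j : ℤ))) := by
    rw [my_sum_Icc]
    refine Finset.sum_congr rfl fun j hj => ?_
    rw [my_sum_Icc]
    refine Finset.sum_congr rfl fun i hi => ?_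
    rw [Finset.mem_range] at hj hi
    have e1 : N + r + 1 + (N + i) - (N + j) - 1 = N + r + i - j := by omega
    have e2 : N + i - N = i := by omega
    have e3 : n - ((N + j : ℕ) : ℤ) + (N : ℤ) = n - (j : ℤ) := by push_cast; ring
    rw [e1, e2, e3]
  rw [hT1, hT2]
  -- unrolled recurrences
  have h1 : m (n + 1) = (A ^ (r + 1)).mulVec (m (n - (r : ℤ)))
      + ∑ i ∈ Finset.range (r + 1), (A ^ i).mulVec (b (n - (i : ℤ))) := by
    have h := my_unroll A m b hrec (r + 1) n
    rwa [show n + 1 - ((r + 1 : ℕ) : ℤ) = n - (r : ℤ) by push_cast; ring] at h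
  have h2 : ∀ j ∈ Finset.range (r + 1),
      m (n + (j : ℤ) - (r : ℤ)) = (A ^ j).mulVec (m (n - (r : ℤ)))
        + ∑ i ∈ Finset.range j, (A ^ i).mulVec (b (n + (j : ℤ) - (r : ℤ) - 1 - (i : ℤ))) := by
    intro j _
    have h := my_unroll A m b hrec j (n + (j : ℤ) - (r : ℤ) - 1)
    rw [show n + (j : ℤ) - (r : ℤ) - 1 + 1 = n + (j : ℤ) - (r : ℤ) by ring] at h
    rwa [show n + (j : ℤ) - (r : ℤ) - (j : ℤ) = n - (r : ℤ) by ring] at h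
  -- expand T1 with h2
  rw [Finset.sum_congr rfl fun j hj => by rw [h2 j hj]]
  simp only [smul_add]
  rw [Finset.sum_add_distrib]
  have h3 : ∑ j ∈ Finset.range (r + 1),
      A.charpoly.coeff (N + j - 1) • (A ^ j).mulVec (m (n - (r : ℤ)))
      = -((A ^ (r + 1)).mulVec (m (n - (r : ℤ)))) := by
    calc ∑ j ∈ Finset.range (r + 1),
          A.charpoly.coeff (N + j - 1) • (A ^ j).mulVec (m (n - (r : ℤ)))
        = (∑ j ∈ Finset.range (r + 1), A.charpoly.coeff (N + j - 1) • A ^ j).mulVec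
            (m (n - (r : ℤ))) := by
          rw [my_sum_mulVec]
          exact Finset.sum_congr rfl fun j _ => (Matrix.smul_mulVec _ _ _).symm
      _ = -((A ^ (r + 1)).mulVec (m (n - (r : ℤ)))) := by
          rw [hK, Matrix.neg_mulVec]
  -- split off top term of T2 inner sums
  have h4 : ∑ j ∈ Finset.range (r + 1), ∑ i ∈ Finset.range (j + 1),
        A.charpoly.coeff (N + r + i - j) • (A ^ i).mulVec (b (n - (j : ℤ)))
      = (∑ j ∈ Finset.range (r + 1), ∑ i ∈ Finset.range j,
          A.charpoly.coeff (N + r + i - j) • (A ^ i).mulVec (b (n - (j : ℤ))))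
        + ∑ j ∈ Finset.range (r + 1), (A ^ j).mulVec (b (n - (j : ℤ))) := by
    rw [← Finset.sum_add_distrib]
    refine Finset.sum_congr rfl fun j _ => ?_
    rw [Finset.sum_range_succ]
    congr 1
    rw [show N + r + j - j = N + r by omega, hcN, one_smul]
  -- the double-sum reindexing
  have h5 : ∑ j ∈ Finset.range (r + 1),
        A.charpoly.coeff (N + j - 1) •
          ∑ i ∈ Finset.range j, (A ^ i).mulVec (b (n + (j : ℤ) - (r : ℤ) - 1 - (i : ℤ)))
      = ∑ j ∈ Finset.range (r + 1), ∑ i ∈ Finset.range j,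
          A.charpoly.coeff (N + r + i - j) • (A ^ i).mulVec (b (n - (j : ℤ))) := by
    simp only [Finset.smul_sum]
    rw [Finset.sum_sigma', Finset.sum_sigma']
    apply Finset.sum_nbij' (fun p => (⟨r + 1 - p.1 + p.2, p.2⟩ : Σ _ : ℕ, ℕ))
      (fun p => (⟨r + 1 - p.1 + p.2, p.2⟩ : Σ _ : ℕ, ℕ))
    · intro a ha
      simp only [Finset.mem_sigma, Finset.mem_range] at ha ⊢
      omega
    · intro a ha
      simp only [Finset.mem_sigma, Finset.mem_range] at ha ⊢
      omega
    · intro a ha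
      simp only [Finset.mem_sigma, Finset.mem_range] at ha
      ext <;> simp <;> omega
    · intro a ha
      simp only [Finset.mem_sigma, Finset.mem_range] at ha
      ext <;> simp <;> omega
    · intro a ha
      simp only [Finset.mem_sigma, Finset.mem_range] at ha
      obtain ⟨ha1, ha2⟩ := ha
      dsimp only
      have e1 : N + a.1 - 1 = N + r + a.2 - (r + 1 - a.1 + a.2) := by omega
      have e2 : n + (a.1 : ℤ) - (r : ℤ) - 1 - (a.2 : ℤ) = n - ((r + 1 - a.1 + a.2 : ℕ) : ℤ) := by
        omega
      rw [e1, e2]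
  rw [h3, h5, h4]
  rw [h1]
  abel
end

section
/- (Theorem 1: two equivalent GPMRT-LB models produce identical finite-difference schemes on the conservative moments.) Let R be a commutative ring, q ≥ 1, and 1 ≤ Ncons ≤ q. Let M, M₁, 𝒩 be q×q matrices over R with M and 𝒩 invertible (their determinants are units in R), M₁ = 𝒩·M, and suppose the first Ncons rows of M₁ coincide with the corresponding rows of M. Let T ∈ R^q and set W := M·diag(T)·M⁻¹, W₁ := M₁·diag(T)·M₁⁻¹. Let S be any q×q matrix over R and S₁ := 𝒩·S·𝒩⁻¹; put A := W·(I_q − S), A₁ := W₁·(I_q − S₁), B := W·S, B₁ := W₁·S₁. Then: (i) charpoly(A₁) = charpoly(A); and (ii) for every j ∈ {1,…,Ncons} and every k: ( adj(charmatrix(A₁)) · (B₁·M₁)ᶜ )_{jk} = ( adj(charmatrix(A)) · (B·M)ᶜ )_{jk} and ( adj(charmatrix(A₁)) · (W₁·M₁)ᶜ )_{jk} = ( adj(charmatrix(A)) · (W·M)ᶜ )_{jk} in R[x], where Xᶜ denotes a matrix over R viewed over R[x] via the constant-polynomial embedding. Consequently the first Ncons rows of the macroscopic finite-difference scheme produced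 by the model (M₁, S₁) coincide with those produced by (M, S). -/
open Matrix Polynomial

section Aux
variable {n : Type*} [Fintype n] [DecidableEq n] {A : Type*} [CommRing A]

lemma conj_adjugate (U V Y : Matrix n n A) (hUV : U * V = 1) (hVU : V * U = 1) :
    (U * Y * V).adjugate = U * Y.adjugate * V := by
  have hU : U.adjugate = U.det • V := by
    calc U.adjugate = (V * U) * U.adjugate := by rw [hVU, one_mul]
    _ = V * (U * U.adjugate) := by rw [Matrix.mul_assoc]
    _ = U.det • V := by rw [Matrix.mul_adjugate, Matrix.mul_smul, Matrix.mul_one]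
  have hV : V.adjugate = V.det • U := by
    calc V.adjugate = (U * V) * V.adjugate := by rw [hUV, one_mul]
    _ = U * (V * V.adjugate) := by rw [Matrix.mul_assoc]
    _ = V.det • U := by rw [Matrix.mul_adjugate, Matrix.mul_smul, Matrix.mul_one]
  have hdet : U.det * V.det = 1 := by rw [← Matrix.det_mul, hUV, Matrix.det_one]
  rw [Matrix.adjugate_mul_distrib, Matrix.adjugate_mul_distrib, hU, hV]
  simp only [Matrix.smul_mul, Matrix.mul_smul, smul_smul]
  rw [hdet, one_smul, Matrix.mul_assoc]

lemma conj_charmatrix (U V Y : Matrix n n A) (hUV : U * V = 1) :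
    Matrix.charmatrix (U * Y * V)
      = U.map C * Matrix.charmatrix Y * V.map C := by
  have h1 : U.map C * V.map C = 1 := by
    rw [← Matrix.map_mul, hUV, Matrix.map_one C C.map_zero C.map_one]
  have hsc : U.map C * Matrix.scalar n (X : A[X]) * V.map C = Matrix.scalar n X := by
    have h := Matrix.scalar_commute (X : A[X]) (fun r' => mul_comm _ _) (U.map C)
    rw [← h.eq, Matrix.mul_assoc, h1, Matrix.mul_one]
  unfold Matrix.charmatrix
  rw [Matrix.mul_sub, Matrix.sub_mul, hsc]
  congr 1
  simp [RingHom.mapMatrix_apply, Matrix.map_mul]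
end Aux


/-- Theorem 1: two equivalent GPMRT-LB models produce identical finite-difference schemes on
the conservative moments. With `M₁ = 𝒩·M` invertible transforms agreeing in their first
`Ncons` rows, `W = M·diag T·M⁻¹`, `W₁ = M₁·diag T·M₁⁻¹`, `S₁ = 𝒩·S·𝒩⁻¹`,
`A = W(I-S)`, `A₁ = W₁(I-S₁)`, `B = W·S`, `B₁ = W₁·S₁`:
(i) `charpoly A₁ = charpoly A`, and (ii) for every row `j < Ncons` and every `k`,
the `(j,k)` entries of `adj(charmatrix A₁)·(B₁M₁)ᶜ` and `adj(charmatrix A)·(BM)ᶜ` agree, and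
likewise with `W₁M₁` and `WM`. -/
theorem equivalent_models_same_scheme {R : Type*} [CommRing R] {q Ncons : ℕ}
    (hq : 1 ≤ q) (hN1 : 1 ≤ Ncons) (hNq : Ncons ≤ q)
    (M M₁ 𝒩 : Matrix (Fin q) (Fin q) R)
    (hM : IsUnit M.det) (h𝒩 : IsUnit 𝒩.det) (hM₁ : M₁ = 𝒩 * M)
    (hrows : ∀ i : Fin q, (i : ℕ) < Ncons → ∀ k : Fin q, M₁ i k = M i k)
    (T : Fin q → R) (S : Matrix (Fin q) (Fin q) R)
    (W W₁ S₁ A A₁ B B₁ : Matrix (Fin q) (Fin q) R)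
    (hW : W = M * Matrix.diagonal T * M⁻¹) (hW₁ : W₁ = M₁ * Matrix.diagonal T * M₁⁻¹)
    (hS₁ : S₁ = 𝒩 * S * 𝒩⁻¹)
    (hA : A = W * (1 - S)) (hA₁ : A₁ = W₁ * (1 - S₁))
    (hB : B = W * S) (hB₁ : B₁ = W₁ * S₁) :
    A₁.charpoly = A.charpoly
    ∧ ∀ j : Fin q, (j : ℕ) < Ncons → ∀ k : Fin q,
        ((Matrix.charmatrix A₁).adjugate * (B₁ * M₁).map Polynomial.C :
            Matrix (Fin q) (Fin q) (Polynomial R)) j k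
          = ((Matrix.charmatrix A).adjugate * (B * M).map Polynomial.C :
              Matrix (Fin q) (Fin q) (Polynomial R)) j k
        ∧ ((Matrix.charmatrix A₁).adjugate * (W₁ * M₁).map Polynomial.C :
            Matrix (Fin q) (Fin q) (Polynomial R)) j k
          = ((Matrix.charmatrix A).adjugate * (W * M).map Polynomial.C :
              Matrix (Fin q) (Fin q) (Polynomial R)) j k := by
  have hNN' : 𝒩 * 𝒩⁻¹ = 1 := Matrix.mul_nonsing_inv 𝒩 h𝒩
  have hNN : 𝒩⁻¹ * 𝒩 = 1 := Matrix.nonsing_inv_mul 𝒩 h𝒩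
  have hM₁inv : M₁⁻¹ = M⁻¹ * 𝒩⁻¹ := by rw [hM₁, Matrix.mul_inv_rev]
  have hW1 : W₁ = 𝒩 * W * 𝒩⁻¹ := by
    rw [hW₁, hM₁inv, hM₁, hW]; simp only [Matrix.mul_assoc]
  have hconj : ∀ X Y : Matrix (Fin q) (Fin q) R,
      (𝒩 * X * 𝒩⁻¹) * (𝒩 * Y * 𝒩⁻¹) = 𝒩 * (X * Y) * 𝒩⁻¹ := by
    intro X Y
    calc (𝒩 * X * 𝒩⁻¹) * (𝒩 * Y * 𝒩⁻¹) = 𝒩 * X * (𝒩⁻¹ * 𝒩) * Y * 𝒩⁻¹ := by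
          simp only [Matrix.mul_assoc]
    _ = 𝒩 * (X * Y) * 𝒩⁻¹ := by rw [hNN, Matrix.mul_one]; simp only [Matrix.mul_assoc]
  have hsub : 1 - S₁ = 𝒩 * (1 - S) * 𝒩⁻¹ := by
    rw [hS₁, Matrix.mul_sub, Matrix.sub_mul, Matrix.mul_one, hNN']
  have hA1 : A₁ = 𝒩 * A * 𝒩⁻¹ := by rw [hA₁, hW1, hsub, hconj, ← hA]
  have hB1 : B₁ = 𝒩 * B * 𝒩⁻¹ := by rw [hB₁, hW1, hS₁, hconj, ← hB]
  have hcm : Matrix.charmatrix A₁ = 𝒩.map C * Matrix.charmatrix A * 𝒩⁻¹.map C := by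
    rw [hA1]; exact conj_charmatrix 𝒩 𝒩⁻¹ A hNN'
  have hNNc' : 𝒩.map C * 𝒩⁻¹.map C = (1 : Matrix (Fin q) (Fin q) R[X]) := by
    rw [← Matrix.map_mul, hNN', Matrix.map_one C C.map_zero C.map_one]
  have hNNc : 𝒩⁻¹.map C * 𝒩.map C = (1 : Matrix (Fin q) (Fin q) R[X]) := by
    rw [← Matrix.map_mul, hNN, Matrix.map_one C C.map_zero C.map_one]
  have hcp : A₁.charpoly = A.charpoly := by
    unfold Matrix.charpoly
    rw [hcm, Matrix.det_mul, Matrix.det_mul, mul_right_comm, ← Matrix.det_mul, hNNc',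
      Matrix.det_one, one_mul]
  refine ⟨hcp, fun j hj k => ?_⟩
  have hadj : (Matrix.charmatrix A₁).adjugate
      = 𝒩.map C * (Matrix.charmatrix A).adjugate * 𝒩⁻¹.map C := by
    rw [hcm]; exact conj_adjugate _ _ _ hNNc' hNNc
  -- row fact
  have h𝒩eq : 𝒩 = M₁ * M⁻¹ := by
    rw [hM₁, Matrix.mul_assoc, Matrix.mul_nonsing_inv M hM, Matrix.mul_one]
  have hrow : ∀ l, 𝒩 j l = (1 : Matrix (Fin q) (Fin q) R) j l := by
    intro l
    rw [h𝒩eq, Matrix.mul_apply]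
    rw [Finset.sum_congr rfl (fun m _ => by rw [hrows j hj m]),
      ← Matrix.mul_apply, Matrix.mul_nonsing_inv M hM]
  have hent : ∀ Z : Matrix (Fin q) (Fin q) R[X], (𝒩.map C * Z) j k = Z j k := by
    intro Z
    rw [Matrix.mul_apply]
    simp only [Matrix.map_apply, hrow, Matrix.one_apply]
    simp [apply_ite (C (R := R)), ite_mul]
  have hkey : ∀ G : Matrix (Fin q) (Fin q) R,
      ((Matrix.charmatrix A₁).adjugate * ((𝒩 * G).map C)) j k
        = ((Matrix.charmatrix A).adjugate * G.map C) j k := by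
    intro G
    rw [hadj, Matrix.map_mul]
    simp only [Matrix.mul_assoc]
    rw [← Matrix.mul_assoc (𝒩⁻¹.map C), hNNc, Matrix.one_mul]
    exact hent _
  have hBM : B₁ * M₁ = 𝒩 * (B * M) := by
    rw [hB1, hM₁]
    calc 𝒩 * B * 𝒩⁻¹ * (𝒩 * M) = 𝒩 * B * (𝒩⁻¹ * 𝒩) * M := by simp only [Matrix.mul_assoc]
    _ = 𝒩 * (B * M) := by rw [hNN, Matrix.mul_one, Matrix.mul_assoc]
  have hWM : W₁ * M₁ = 𝒩 * (W * M) := by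
    rw [hW1, hM₁]
    calc 𝒩 * W * 𝒩⁻¹ * (𝒩 * M) = 𝒩 * W * (𝒩⁻¹ * 𝒩) * M := by simp only [Matrix.mul_assoc]
    _ = 𝒩 * (W * M) := by rw [hNN, Matrix.mul_one, Matrix.mul_assoc]
  exact ⟨by rw [hBM]; exact hkey _, by rw [hWM]; exact hkey _⟩
end

section
/- (Theorem 2: the projected finite-difference scheme is invariant under a change of moment basis.) Let R be a commutative ring, q ≥ 1, 1 ≤ N ≤ q. Let M, M₁, 𝒩 be q×q matrices over R with M and 𝒩 invertible, M₁ = 𝒩·M, and the first N rows of M₁ equal to those of M. Let T ∈ R^q, W := M·diag(T)·M⁻¹, W₁ := M₁·diag(T)·M₁⁻¹; let S be a q×q matrix over R, S₁ := 𝒩·S·𝒩⁻¹; put A := W(I_q − S), A₁ := W₁(I_q − S₁), B := W·S, B₁ := W₁·S₁. For j ∈ {1,…,N} let P_j := Σ_{l ∈ {j} ∪ {N+1,…,q}} e_l·e_lᵀ, P_j¹ := 𝒩·P_j·𝒩⁻¹, Ã_j := A·P_j, Ã_j¹ := A₁·P_j¹, Ā_j := A − Ã_j, Ā_j¹ :=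 A₁ − Ã_j¹. Then: (i) Ã_j¹ = 𝒩·Ã_j·𝒩⁻¹, and hence charpoly(Ã_j¹) = charpoly(Ã_j); (ii) for every k: ( adj(charmatrix(Ã_j¹)) · (Ā_j¹·𝒩)ᶜ )_{jk} = ( adj(charmatrix(Ã_j)) · Ā_jᶜ )_{jk}, ( adj(charmatrix(Ã_j¹)) · (B₁·M₁)ᶜ )_{jk} = ( adj(charmatrix(Ã_j)) · (B·M)ᶜ )_{jk}, and ( adj(charmatrix(Ã_j¹)) · (W₁·M₁)ᶜ )_{jk} = ( adj(charmatrix(Ã_j)) · (W·M)ᶜ )_{jk} in R[x]. Consequently the finite-difference scheme on the j-th conservative moment written in the moments m^{(1)} = M₁·f of the model (M₁, S₁) coincides with the scheme of (M, S). -/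
open Polynomial Matrix in
lemma aux_charmatrix_conj {R : Type*} [CommRing R] {q : ℕ} (𝒩 X : Matrix (Fin q) (Fin q) R)
    (h1 : 𝒩 * 𝒩⁻¹ = 1) :
    Matrix.charmatrix (𝒩 * X * 𝒩⁻¹)
      = 𝒩.map Polynomial.C * Matrix.charmatrix X * 𝒩⁻¹.map Polynomial.C := by
  have hNu : 𝒩.map (Polynomial.C : R →+* R[X]) * 𝒩⁻¹.map Polynomial.C
      = (1 : Matrix (Fin q) (Fin q) R[X]) := by
    rw [← Matrix.map_mul, h1, Matrix.map_one _ (map_zero _) (map_one _)]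
  have hscal : (Matrix.scalar (Fin q)) (Polynomial.X : R[X])
      = (Polynomial.X : R[X]) • (1 : Matrix (Fin q) (Fin q) R[X]) := by
    ext i k
    simp [Matrix.scalar_apply, Matrix.one_apply, Matrix.diagonal_apply, mul_ite]
  unfold Matrix.charmatrix
  rw [Matrix.mul_sub, Matrix.sub_mul]
  congr 1
  · rw [hscal, Matrix.mul_smul, Matrix.smul_mul, Matrix.mul_one, hNu]
  · simp only [RingHom.mapMatrix_apply, Matrix.map_mul]

open Polynomial Matrix in
lemma aux_entry {R : Type*} [CommRing R] {q : ℕ} (𝒩 X Y : Matrix (Fin q) (Fin q) R)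
    (h1 : 𝒩 * 𝒩⁻¹ = 1) (h2 : 𝒩⁻¹ * 𝒩 = 1) (j k : Fin q)
    (hrow : ∀ l, 𝒩 j l = (1 : Matrix (Fin q) (Fin q) R) j l) :
    ((Matrix.charmatrix (𝒩 * X * 𝒩⁻¹)).adjugate * ((𝒩 * Y).map Polynomial.C)) j k
      = ((Matrix.charmatrix X).adjugate * (Y.map Polynomial.C)) j k := by
  set Nc := 𝒩.map (Polynomial.C : R →+* R[X]) with hNc
  set uc := 𝒩⁻¹.map (Polynomial.C : R →+* R[X]) with huc
  have hNu : Nc * uc = 1 := by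
    rw [hNc, huc, ← Matrix.map_mul, h1, Matrix.map_one _ (map_zero _) (map_one _)]
  have huN : uc * Nc = 1 := by
    rw [hNc, huc, ← Matrix.map_mul, h2, Matrix.map_one _ (map_zero _) (map_one _)]
  set Xc := Matrix.charmatrix X with hXc
  have hadj : (Matrix.charmatrix (𝒩 * X * 𝒩⁻¹)).adjugate
      = uc.adjugate * Xc.adjugate * Nc.adjugate := by
    rw [aux_charmatrix_conj 𝒩 X h1, Matrix.adjugate_mul_distrib, Matrix.adjugate_mul_distrib,
      Matrix.mul_assoc]
  have hadju : uc.adjugate = uc.det • Nc := by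
    calc uc.adjugate = uc.adjugate * (uc * Nc) := by rw [huN, Matrix.mul_one]
      _ = (uc.adjugate * uc) * Nc := by rw [Matrix.mul_assoc]
      _ = uc.det • Nc := by rw [Matrix.adjugate_mul, Matrix.smul_mul, Matrix.one_mul]
  have hdet : uc.det * Nc.det = 1 := by
    rw [← Matrix.det_mul, huN, Matrix.det_one]
  have hmain : (Matrix.charmatrix (𝒩 * X * 𝒩⁻¹)).adjugate * ((𝒩 * Y).map Polynomial.C)
      = Nc * (Xc.adjugate * Y.map Polynomial.C) := by
    have hmapY : (𝒩 * Y).map (Polynomial.C : R →+* R[X]) = Nc * Y.map Polynomial.C :=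
      Matrix.map_mul
    rw [hadj, hmapY, hadju]
    calc uc.det • Nc * Xc.adjugate * Nc.adjugate * (Nc * Y.map Polynomial.C)
        = uc.det • (Nc * Xc.adjugate * (Nc.adjugate * Nc * Y.map Polynomial.C)) := by
          simp only [Matrix.smul_mul, Matrix.mul_assoc]
      _ = uc.det • (Nc * Xc.adjugate * (Nc.det • (Y.map Polynomial.C))) := by
          rw [Matrix.adjugate_mul, Matrix.smul_mul, Matrix.one_mul]
      _ = (uc.det * Nc.det) • (Nc * (Xc.adjugate * Y.map Polynomial.C)) := by
          rw [Matrix.mul_smul, smul_smul, Matrix.mul_assoc]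
      _ = Nc * (Xc.adjugate * Y.map Polynomial.C) := by rw [hdet, one_smul]
  rw [hmain, Matrix.mul_apply]
  have hrowNc : ∀ l, Nc j l = (1 : Matrix (Fin q) (Fin q) R[X]) j l := by
    intro l
    rw [hNc, Matrix.map_apply, hrow l, Matrix.one_apply, Matrix.one_apply]
    split <;> simp
  calc ∑ l, Nc j l * (Xc.adjugate * Y.map Polynomial.C) l k
      = ∑ l, (1 : Matrix (Fin q) (Fin q) R[X]) j l * (Xc.adjugate * Y.map Polynomial.C) l k :=
        Finset.sum_congr rfl fun l _ => by rw [hrowNc l]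
    _ = ((1 : Matrix (Fin q) (Fin q) R[X]) * (Xc.adjugate * Y.map Polynomial.C)) j k :=
        (Matrix.mul_apply).symm
    _ = _ := by rw [Matrix.one_mul]



/-- Theorem 2: the projected finite-difference scheme is invariant under a change of moment
basis. With `M₁ = 𝒩·M` agreeing with `M` in the first `N` rows, `W = M·diag T·M⁻¹`,
`W₁ = M₁·diag T·M₁⁻¹`, `S₁ = 𝒩·S·𝒩⁻¹`, `A = W(I-S)`, `A₁ = W₁(I-S₁)`, `B = W·S`,
`B₁ = W₁·S₁`, `P₁ = 𝒩·P·𝒩⁻¹`, `Atil = A·P` (= Ã_j), `Atil₁ = A₁·P₁` (= Ã_j¹),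
`Abar = A - Atil` (= Ā_j), `Abar₁ = A₁ - Atil₁` (= Ā_j¹):
(i) `Atil₁ = 𝒩·Atil·𝒩⁻¹` and `charpoly(Atil₁) = charpoly(Atil)`;
(ii) for every `k`, the `(j,k)` entries of `adj(charmatrix Atil₁)·(Abar₁𝒩)ᶜ` and
`adj(charmatrix Atil)·Abarᶜ` agree, and likewise for `(B₁M₁)ᶜ` vs `(BM)ᶜ` and
`(W₁M₁)ᶜ` vs `(WM)ᶜ`. -/
theorem projected_scheme_basis_invariant {R : Type*} [CommRing R] {q N : ℕ}
    (hq : 1 ≤ q) (hN1 : 1 ≤ N) (hNq : N ≤ q)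
    (M M₁ 𝒩 : Matrix (Fin q) (Fin q) R)
    (hM : IsUnit M.det) (h𝒩 : IsUnit 𝒩.det) (hM₁ : M₁ = 𝒩 * M)
    (hrows : ∀ i : Fin q, (i : ℕ) < N → ∀ k : Fin q, M₁ i k = M i k)
    (T : Fin q → R) (S : Matrix (Fin q) (Fin q) R)
    (W W₁ S₁ A A₁ B B₁ : Matrix (Fin q) (Fin q) R)
    (hW : W = M * Matrix.diagonal T * M⁻¹) (hW₁ : W₁ = M₁ * Matrix.diagonal T * M₁⁻¹)
    (hS₁ : S₁ = 𝒩 * S * 𝒩⁻¹)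
    (hA : A = W * (1 - S)) (hA₁ : A₁ = W₁ * (1 - S₁))
    (hB : B = W * S) (hB₁ : B₁ = W₁ * S₁)
    (j : Fin q) (hj : (j : ℕ) < N)
    (P P₁ Atil Atil₁ Abar Abar₁ : Matrix (Fin q) (Fin q) R)
    (hP : P = gpmfdProj R N j) (hP₁ : P₁ = 𝒩 * P * 𝒩⁻¹)
    (hAtil : Atil = A * P) (hAtil₁ : Atil₁ = A₁ * P₁)
    (hAbar : Abar = A - Atil) (hAbar₁ : Abar₁ = A₁ - Atil₁) :
    (Atil₁ = 𝒩 * Atil * 𝒩⁻¹ ∧ Atil₁.charpoly = Atil.charpoly)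
    ∧ ∀ k : Fin q,
        ((Matrix.charmatrix Atil₁).adjugate * (Abar₁ * 𝒩).map Polynomial.C :
            Matrix (Fin q) (Fin q) (Polynomial R)) j k
          = ((Matrix.charmatrix Atil).adjugate * Abar.map Polynomial.C :
              Matrix (Fin q) (Fin q) (Polynomial R)) j k
        ∧ ((Matrix.charmatrix Atil₁).adjugate * (B₁ * M₁).map Polynomial.C :
            Matrix (Fin q) (Fin q) (Polynomial R)) j k
          = ((Matrix.charmatrix Atil).adjugate * (B * M).map Polynomial.C :
              Matrix (Fin q) (Fin q) (Polynomial R)) j k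
        ∧ ((Matrix.charmatrix Atil₁).adjugate * (W₁ * M₁).map Polynomial.C :
            Matrix (Fin q) (Fin q) (Polynomial R)) j k
          = ((Matrix.charmatrix Atil).adjugate * (W * M).map Polynomial.C :
              Matrix (Fin q) (Fin q) (Polynomial R)) j k := by
  
  have h𝒩i : 𝒩 * 𝒩⁻¹ = 1 := Matrix.mul_nonsing_inv 𝒩 h𝒩
  have hi𝒩 : 𝒩⁻¹ * 𝒩 = 1 := Matrix.nonsing_inv_mul 𝒩 h𝒩
  have hMM : M * M⁻¹ = 1 := Matrix.mul_nonsing_inv M hM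
  have hconj : ∀ X Y : Matrix (Fin q) (Fin q) R,
      (𝒩 * X * 𝒩⁻¹) * (𝒩 * Y * 𝒩⁻¹) = 𝒩 * (X * Y) * 𝒩⁻¹ := by
    intro X Y
    calc (𝒩 * X * 𝒩⁻¹) * (𝒩 * Y * 𝒩⁻¹)
        = 𝒩 * (X * ((𝒩⁻¹ * 𝒩) * (Y * 𝒩⁻¹))) := by simp only [Matrix.mul_assoc]
      _ = 𝒩 * (X * Y) * 𝒩⁻¹ := by rw [hi𝒩, Matrix.one_mul]; simp only [Matrix.mul_assoc]
  have hW₁' : W₁ = 𝒩 * W * 𝒩⁻¹ := by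
    have hM₁inv : M₁⁻¹ = M⁻¹ * 𝒩⁻¹ := by rw [hM₁, Matrix.mul_inv_rev]
    rw [hW₁, hM₁inv, hM₁, hW]
    simp only [Matrix.mul_assoc]
  have h1S : 1 - S₁ = 𝒩 * (1 - S) * 𝒩⁻¹ := by
    rw [Matrix.mul_sub, Matrix.mul_one, Matrix.sub_mul, h𝒩i, hS₁]
  have hA₁' : A₁ = 𝒩 * A * 𝒩⁻¹ := by rw [hA₁, hW₁', h1S, hconj, ← hA]
  have hAtil₁' : Atil₁ = 𝒩 * Atil * 𝒩⁻¹ := by rw [hAtil₁, hA₁', hP₁, hconj, ← hAtil]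
  have hAbar₁' : Abar₁ = 𝒩 * Abar * 𝒩⁻¹ := by
    rw [hAbar₁, hA₁', hAtil₁', hAbar, Matrix.mul_sub, Matrix.sub_mul]
  have hB₁' : B₁ = 𝒩 * B * 𝒩⁻¹ := by rw [hB₁, hW₁', hS₁, hconj, ← hB]
  have hcan : ∀ Z : Matrix (Fin q) (Fin q) R, (𝒩 * Z * 𝒩⁻¹) * 𝒩 = 𝒩 * Z := by
    intro Z; rw [Matrix.mul_assoc, hi𝒩, Matrix.mul_one]
  have hAbar𝒩 : Abar₁ * 𝒩 = 𝒩 * Abar := by rw [hAbar₁', hcan]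
  have hBM : B₁ * M₁ = 𝒩 * (B * M) := by
    rw [hB₁', hM₁, ← Matrix.mul_assoc, hcan, Matrix.mul_assoc]
  have hWM : W₁ * M₁ = 𝒩 * (W * M) := by
    rw [hW₁', hM₁, ← Matrix.mul_assoc, hcan, Matrix.mul_assoc]
  have hrow : ∀ l, 𝒩 j l = (1 : Matrix (Fin q) (Fin q) R) j l := by
    intro l
    have h1 : 𝒩 = M₁ * M⁻¹ := by rw [hM₁, Matrix.mul_assoc, hMM, Matrix.mul_one]
    rw [h1]
    calc (M₁ * M⁻¹) j l = ∑ m, M₁ j m * M⁻¹ m l := Matrix.mul_apply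
      _ = ∑ m, M j m * M⁻¹ m l :=
          Finset.sum_congr rfl fun m _ => by rw [hrows j hj m]
      _ = (M * M⁻¹) j l := (Matrix.mul_apply).symm
      _ = (1 : Matrix (Fin q) (Fin q) R) j l := by rw [hMM]
  have hcharpoly : Atil₁.charpoly = Atil.charpoly := by
    have hdet1 : (𝒩.map (Polynomial.C : R →+* Polynomial R)).det
        * ((𝒩⁻¹).map (Polynomial.C : R →+* Polynomial R)).det = 1 := by
      rw [← Matrix.det_mul, ← Matrix.map_mul, h𝒩i,
        Matrix.map_one _ (map_zero _) (map_one _), Matrix.det_one]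
    unfold Matrix.charpoly
    rw [hAtil₁', aux_charmatrix_conj _ _ h𝒩i, Matrix.det_mul, Matrix.det_mul]
    calc (𝒩.map Polynomial.C).det * (Matrix.charmatrix Atil).det
          * ((𝒩⁻¹).map Polynomial.C).det
        = ((𝒩.map Polynomial.C).det * ((𝒩⁻¹).map Polynomial.C).det)
            * (Matrix.charmatrix Atil).det := by ring
      _ = (Matrix.charmatrix Atil).det := by rw [hdet1, one_mul]
  refine ⟨⟨hAtil₁', hcharpoly⟩, fun k => ⟨?_, ?_, ?_⟩⟩
  · rw [hAtil₁', hAbar𝒩]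
    exact aux_entry 𝒩 Atil Abar h𝒩i hi𝒩 j k hrow
  · rw [hAtil₁', hBM]
    exact aux_entry 𝒩 Atil (B * M) h𝒩i hi𝒩 j k hrow
  · rw [hAtil₁', hWM]
    exact aux_entry 𝒩 Atil (W * M) h𝒩i hi𝒩 j k hrow
end

section
/- (Corollary 2: the scheme on the j-th conservative moment is independent of the relaxation entries in the first N columns of a block-lower-triangular relaxation matrix.) Let R be a commutative ring, q ≥ 1, 1 ≤ N ≤ q, j ∈ {1,…,N}, and W a q×q matrix over R. Let S and S′ be q×q matrices over R such that: (a) S_{il} = 0 and S′_{il} = 0 whenever l ≤ N and i < l, and whenever i ≤ N and l > N (block-lower-triangular shape as in the paper); and (b) S_{il} = S′_{il} whenever l > N (the two matrices agree in all columns beyond the N-th). Put A(·) := W·(I_q − ·), B(·) := W·(·), and Ã_j(·) := A(·)·P_j with P_j := Σ_{l ∈ {j} ∪ {N+1,…,q}} e_l·e_lᵀ. Then: (1) for every k, adj(charmatrix(Ã_j(S)))_{jk} = adj(charmatrix(Ã_j(S′)))_{jk} in R[x]; (2) charpoly(Ã_j(S)) − ( adj(charmatrix(Ã_j(S))) ·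 B(S)ᶜ )_{jj} = charpoly(Ã_j(S′)) − ( adj(charmatrix(Ã_j(S′))) · B(S′)ᶜ )_{jj}; and (3) for every k ∈ {N+1,…,q}, ( adj(charmatrix(Ã_j(S))) · B(S)ᶜ )_{jk} = ( adj(charmatrix(Ã_j(S′))) · B(S′)ᶜ )_{jk}. Consequently the finite-difference scheme on the j-th conservative moment does not depend on the relaxation entries S_{il} with l ∈ {1,…,N}. -/
open Matrix Polynomial

/-- If two square matrices agree outside column `j`, their adjugates agree on row `j`. -/
lemma adjugate_row_eq_of_eq_off_col {n : Type*} [DecidableEq n] [Fintype n]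
    {R : Type*} [CommRing R] (A B : Matrix n n R) (j : n)
    (h : ∀ i l, l ≠ j → A i l = B i l) (k : n) :
    A.adjugate j k = B.adjugate j k := by
  have key : ∀ M : Matrix n n R,
      M.adjugate j k = (M.updateCol j (Pi.single k 1)).det := by
    intro M
    have : M.adjugate j k = (M.adjugate)ᵀ k j := rfl
    rw [this, Matrix.adjugate_transpose, Matrix.adjugate_apply,
      Matrix.updateRow_transpose, Matrix.det_transpose]
  rw [key A, key B]
  congr 1
  ext i l
  by_cases hl : l = j
  · subst hl; simp [Matrix.updateCol_apply]
  · rw [Matrix.updateCol_ne hl, Matrix.updateCol_ne hl, h i l hl]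

/-- Corollary 2: the scheme on the `j`-th conservative moment is independent of the
relaxation entries in the first `N` columns of a block-lower-triangular relaxation matrix.
Indices are 0-based: `S i l = 0` whenever (`(l:ℕ) < N` and `(i:ℕ) < (l:ℕ)`) or
(`(i:ℕ) < N` and `N ≤ (l:ℕ)`), `S` and `S'` agree in all columns `l` with `N ≤ (l:ℕ)`, and
`Ã_j(S) = W(I-S)·P_j`, `B(S) = W·S`. -/
theorem scheme_independent_of_lower_block {R : Type*} [CommRing R] {q N : ℕ}
    (hq : 1 ≤ q) (hN1 : 1 ≤ N) (hNq : N ≤ q) (j : Fin q) (hj : (j : ℕ) < N)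
    (W S S' : Matrix (Fin q) (Fin q) R)
    (hSshape : ∀ i l : Fin q,
      (((l : ℕ) < N ∧ (i : ℕ) < (l : ℕ)) ∨ ((i : ℕ) < N ∧ N ≤ (l : ℕ))) →
        S i l = 0 ∧ S' i l = 0)
    (hSagree : ∀ i l : Fin q, N ≤ (l : ℕ) → S i l = S' i l) :
    (∀ k : Fin q,
      (Matrix.charmatrix (W * (1 - S) * gpmfdProj R N j)).adjugate j k
        = (Matrix.charmatrix (W * (1 - S') * gpmfdProj R N j)).adjugate j k)
    ∧ ((W * (1 - S) * gpmfdProj R N j).charpoly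
        - ((Matrix.charmatrix (W * (1 - S) * gpmfdProj R N j)).adjugate
            * (W * S).map Polynomial.C : Matrix (Fin q) (Fin q) (Polynomial R)) j j
      = (W * (1 - S') * gpmfdProj R N j).charpoly
        - ((Matrix.charmatrix (W * (1 - S') * gpmfdProj R N j)).adjugate
            * (W * S').map Polynomial.C : Matrix (Fin q) (Fin q) (Polynomial R)) j j)
    ∧ ∀ k : Fin q, N ≤ (k : ℕ) →
        ((Matrix.charmatrix (W * (1 - S) * gpmfdProj R N j)).adjugate
            * (W * S).map Polynomial.C : Matrix (Fin q) (Fin q) (Polynomial R)) j k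
          = ((Matrix.charmatrix (W * (1 - S') * gpmfdProj R N j)).adjugate
              * (W * S').map Polynomial.C : Matrix (Fin q) (Fin q) (Polynomial R)) j k := by
  set M := W * (1 - S) * gpmfdProj R N j with hM
  set M' := W * (1 - S') * gpmfdProj R N j with hM'
  -- M and M' agree off column j
  have hoff : ∀ i l : Fin q, l ≠ j → M i l = M' i l := by
    intro i l hl
    rw [hM, hM', gpmfdProj, Matrix.mul_diagonal, Matrix.mul_diagonal]
    by_cases hNl : N ≤ (l : ℕ)
    · have hcol : (W * (1 - S)) i l = (W * (1 - S')) i l := by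
        rw [mul_sub, mul_sub, mul_one]
        simp only [Matrix.sub_apply]
        congr 1
        rw [Matrix.mul_apply, Matrix.mul_apply]
        exact Finset.sum_congr rfl fun m _ => by rw [hSagree m l hNl]
      rw [hcol]
    · simp [hl, hNl]
  -- charmatrices agree off column j
  have hcm : ∀ i l : Fin q, l ≠ j →
      (Matrix.charmatrix M) i l = (Matrix.charmatrix M') i l := by
    intro i l hl
    by_cases hil : i = l
    · subst hil
      rw [Matrix.charmatrix_apply_eq, Matrix.charmatrix_apply_eq, hoff i i hl]
    · rw [Matrix.charmatrix_apply_ne _ _ _ hil, Matrix.charmatrix_apply_ne _ _ _ hil,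
        hoff i l hl]
  -- Part 1
  have hadj : ∀ k : Fin q,
      (Matrix.charmatrix M).adjugate j k = (Matrix.charmatrix M').adjugate j k :=
    adjugate_row_eq_of_eq_off_col _ _ j hcm
  refine ⟨hadj, ?_, ?_⟩
  · -- Part 2
    have hc : ∀ M0 : Matrix (Fin q) (Fin q) R,
        ((Matrix.charmatrix M0).adjugate * Matrix.charmatrix M0) j j = M0.charpoly := by
      intro M0
      rw [Matrix.adjugate_mul]
      simp [Matrix.charpoly]
    have hMcol : ∀ m : Fin q, M m j = W m j - (W * S) m j := by
      intro m
      rw [hM, mul_sub, mul_one, gpmfdProj, Matrix.mul_diagonal]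
      simp [Matrix.sub_apply]
    have hM'col : ∀ m : Fin q, M' m j = W m j - (W * S') m j := by
      intro m
      rw [hM', mul_sub, mul_one, gpmfdProj, Matrix.mul_diagonal]
      simp [Matrix.sub_apply]
    have keycol : ∀ m : Fin q,
        (Matrix.charmatrix M) m j - Polynomial.C ((W * S) m j)
          = (Matrix.charmatrix M') m j - Polynomial.C ((W * S') m j) := by
      intro m
      by_cases hmj : m = j
      · subst hmj
        rw [Matrix.charmatrix_apply_eq, Matrix.charmatrix_apply_eq, hMcol, hM'col]
        simp [map_sub]
        ring
      · rw [Matrix.charmatrix_apply_ne _ _ _ hmj, Matrix.charmatrix_apply_ne _ _ _ hmj,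
          hMcol, hM'col]
        simp [map_sub]
    have expand : ∀ (M0 : Matrix (Fin q) (Fin q) R) (B0 : Matrix (Fin q) (Fin q) R),
        M0.charpoly
          - ((Matrix.charmatrix M0).adjugate * B0.map Polynomial.C) j j
          = ∑ m : Fin q, (Matrix.charmatrix M0).adjugate j m
              * ((Matrix.charmatrix M0) m j - Polynomial.C (B0 m j)) := by
      intro M0 B0
      rw [← hc M0, Matrix.mul_apply, Matrix.mul_apply, ← Finset.sum_sub_distrib]
      exact Finset.sum_congr rfl fun m _ => by rw [Matrix.map_apply, mul_sub]
    rw [expand M (W * S), expand M' (W * S')]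
    exact Finset.sum_congr rfl fun m _ => by rw [hadj m, keycol m]
  · -- Part 3
    intro k hk
    rw [Matrix.mul_apply, Matrix.mul_apply]
    refine Finset.sum_congr rfl fun m _ => ?_
    have hB : (W * S) m k = (W * S') m k := by
      rw [Matrix.mul_apply, Matrix.mul_apply]
      exact Finset.sum_congr rfl fun l _ => by rw [hSagree l k hk]
    rw [hadj m, Matrix.map_apply, Matrix.map_apply, hB]
end
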